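/- arXiv:1409.5511 — 4 statements merged into one kernel-verified Lean document; each statement's English description precedes it below -/
import Mathlib

section
/- In the weak commutativity group χ(H) of a group H, the subgroup R(H) = [H, L(H), H^ψ] is a normal subgroup of χ(H) which is invariant under the automorphism of χ(H) swapping H and H^ψ; moreover [W(H), H] ≤ R(H) ≤ W(H) ≤ D(H), and D(H) centralizes L(H), i.e. [D(H), L(H)] = 1. -/
open Subgroup
open scoped commutatorElement

/-- Relators of the weak commutativity group. -/
def chiRel (H : Type*) [Group H] : Set (Monoid.Coprod H H) :=
  {x | ∃ h : H, x = ⁅(Monoid.Coprod.inl h : Monoid.Coprod H H), Monoid.Coprod.inr h⁆}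

/-- The weak commutativity group χ(H). -/
def chi (H : Type*) [Group H] : Type _ :=
  Monoid.Coprod H H ⧸ Subgroup.normalClosure (chiRel H)

noncomputable instance (H : Type*) [Group H] : Group (chi H) :=
  QuotientGroup.Quotient.group _

/-- Canonical map H → χ(H). -/
noncomputable def chiIota (H : Type*) [Group H] : H →* chi H :=
  (QuotientGroup.mk' _).comp Monoid.Coprod.inl

/-- Canonical map H → χ(H), h ↦ h^ψ. -/
noncomputable def chiPsi (H : Type*) [Group H] : H →* chi H :=
  (QuotientGroup.mk' _).comp Monoid.Coprod.inr

noncomputable def chiH (H : Type*) [Group H] : Subgroup (chi H) := (chiIota H).range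
noncomputable def chiHpsi (H : Type*) [Group H] : Subgroup (chi H) := (chiPsi H).range

/-- L(H) = ⟨h⁻¹ h^ψ⟩. -/
noncomputable def Lsub (H : Type*) [Group H] : Subgroup (chi H) :=
  Subgroup.closure {x | ∃ h : H, x = (chiIota H h)⁻¹ * chiPsi H h}

/-- D(H) = [H, H^ψ]. -/
noncomputable def Dsub (H : Type*) [Group H] : Subgroup (chi H) := ⁅chiH H, chiHpsi H⁆

/-- W(H) = L(H) ∩ D(H). -/
noncomputable def Wsub (H : Type*) [Group H] : Subgroup (chi H) := Lsub H ⊓ Dsub H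

/-- R(H) = [H, L(H), H^ψ]. -/
noncomputable def Rsub (H : Type*) [Group H] : Subgroup (chi H) := ⁅⁅chiH H, Lsub H⁆, chiHpsi H⁆



namespace ChiAux

variable {H G : Type*} [Group H] [Group G]

section Words
variable (f g : H →* G) (hc : ∀ h, Commute (f h) (g h))
include hc

/-- (★): `[A,B']^B = [A',B]^{B'}` in explicit word form. -/
lemma hS1 (a b : H) :
    (f b)⁻¹ * ((f a)⁻¹ * (g b)⁻¹ * f a * g b) * f b
      = (g b)⁻¹ * ((g a)⁻¹ * (f b)⁻¹ * g a * f b) * g b := by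
  have h1 : f a * (g a)⁻¹ = (g a)⁻¹ * f a := (hc a).inv_right.eq
  have h2 : f b * (g b)⁻¹ = (g b)⁻¹ * f b := (hc b).inv_right.eq
  have h3 : f a * f b * (g a * g b) = g a * g b * (f a * f b) := by
    simpa [map_mul] using (hc (a * b)).eq
  rw [← mul_inv_eq_one]
  calc (f b)⁻¹ * ((f a)⁻¹ * (g b)⁻¹ * f a * g b) * f b *
        ((g b)⁻¹ * ((g a)⁻¹ * (f b)⁻¹ * g a * f b) * g b)⁻¹
      = ((f b)⁻¹ * (f a)⁻¹ * (g b)⁻¹ * f a * g b) * (f b * (g b)⁻¹) *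
          ((f b)⁻¹ * (g a)⁻¹ * f b * g a * g b) := by group
    _ = ((f b)⁻¹ * (f a)⁻¹ * (g b)⁻¹ * f a * g b) * ((g b)⁻¹ * f b) *
          ((f b)⁻¹ * (g a)⁻¹ * f b * g a * g b) := by rw [h2]
    _ = ((f b)⁻¹ * (f a)⁻¹ * (g b)⁻¹) * (f a * (g a)⁻¹) * (f b * g a * g b) := by group
    _ = ((f b)⁻¹ * (f a)⁻¹ * (g b)⁻¹) * ((g a)⁻¹ * f a) * (f b * g a * g b) := by rw [h1]
    _ = ((f b)⁻¹ * (f a)⁻¹ * (g b)⁻¹ * (g a)⁻¹) * (f a * f b * (g a * g b)) := by group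
    _ = ((f b)⁻¹ * (f a)⁻¹ * (g b)⁻¹ * (g a)⁻¹) * (g a * g b * (f a * f b)) := by rw [h3]
    _ = 1 := by group

/-- (2′): `[A',B] = l(a)⁻¹ [A,B'] l(a)`. -/
lemma hS2 (a b : H) :
    (g a)⁻¹ * (f b)⁻¹ * g a * f b
      = ((g a)⁻¹ * f a) * ((f a)⁻¹ * (g b)⁻¹ * f a * g b) * ((f a)⁻¹ * g a) := by
  have h := hS1 f g hc b a
  calc (g a)⁻¹ * (f b)⁻¹ * g a * f b
      = f a * ((f a)⁻¹ * ((f b)⁻¹ * (g a)⁻¹ * f b * g a) * f a)⁻¹ * (f a)⁻¹ := by group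
    _ = f a * ((g a)⁻¹ * ((g b)⁻¹ * (f a)⁻¹ * g b * f a) * g a)⁻¹ * (f a)⁻¹ := by rw [h]
    _ = (f a * (g a)⁻¹) * ((f a)⁻¹ * (g b)⁻¹ * f a * g b) * (g a * (f a)⁻¹) := by group
    _ = ((g a)⁻¹ * f a) * ((f a)⁻¹ * (g b)⁻¹ * f a * g b) * (g a * (f a)⁻¹) := by
        rw [(hc a).inv_right.eq]
    _ = ((g a)⁻¹ * f a) * ((f a)⁻¹ * (g b)⁻¹ * f a * g b) * ((f a)⁻¹ * g a) := by
        rw [← (hc a).inv_left.eq]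

/-- `l(a)^{f c}` commutes with `[f c, g b]`. -/
lemma hSB (a b c : H) :
    Commute ((f c)⁻¹ * ((f a)⁻¹ * g a) * f c) ((f c)⁻¹ * (g b)⁻¹ * f c * g b) := by
  have e1 : (f b)⁻¹ * g a * f b = (g b)⁻¹ * f a * g b * (f a)⁻¹ * g a := by
    calc (f b)⁻¹ * g a * f b
        = g a * ((g a)⁻¹ * (f b)⁻¹ * g a * f b) := by group
      _ = g a * (((g a)⁻¹ * f a) * ((f a)⁻¹ * (g b)⁻¹ * f a * g b) * ((f a)⁻¹ * g a)) := by
          rw [hS2 f g hc a b]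
      _ = (g b)⁻¹ * f a * g b * (f a)⁻¹ * g a := by group
  have e2 : (f b)⁻¹ * g c * f b = (g b)⁻¹ * f c * g b * (f c)⁻¹ * g c := by
    calc (f b)⁻¹ * g c * f b
        = g c * ((g c)⁻¹ * (f b)⁻¹ * g c * f b) := by group
      _ = g c * (((g c)⁻¹ * f c) * ((f c)⁻¹ * (g b)⁻¹ * f c * g b) * ((f c)⁻¹ * g c)) := by
          rw [hS2 f g hc c b]
      _ = (g b)⁻¹ * f c * g b * (f c)⁻¹ * g c := by group
  have e3 : (f b)⁻¹ * (g a * g c) * f b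
      = (g b)⁻¹ * (f a * f c) * g b * (f c)⁻¹ * (f a)⁻¹ * (g a * g c) := by
    have h := hS2 f g hc (a * c) b
    simp only [map_mul] at h
    calc (f b)⁻¹ * (g a * g c) * f b
        = (g a * g c) * ((g a * g c)⁻¹ * (f b)⁻¹ * (g a * g c) * f b) := by group
      _ = (g a * g c) * (((g a * g c)⁻¹ * (f a * f c)) *
            ((f a * f c)⁻¹ * (g b)⁻¹ * (f a * f c) * g b) * ((f a * f c)⁻¹ * (g a * g c))) := by
          rw [h]
      _ = (g b)⁻¹ * (f a * f c) * g b * (f c)⁻¹ * (f a)⁻¹ * (g a * g c) := by group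
  have ss : ((g b)⁻¹ * f a * g b * (f a)⁻¹ * g a) * ((g b)⁻¹ * f c * g b * (f c)⁻¹ * g c)
      = (g b)⁻¹ * (f a * f c) * g b * (f c)⁻¹ * (f a)⁻¹ * (g a * g c) := by
    calc ((g b)⁻¹ * f a * g b * (f a)⁻¹ * g a) * ((g b)⁻¹ * f c * g b * (f c)⁻¹ * g c)
        = ((f b)⁻¹ * g a * f b) * ((g b)⁻¹ * f c * g b * (f c)⁻¹ * g c) := by rw [e1]
      _ = ((f b)⁻¹ * g a * f b) * ((f b)⁻¹ * g c * f b) := by rw [e2]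
      _ = (f b)⁻¹ * (g a * g c) * f b := by group
      _ = (g b)⁻¹ * (f a * f c) * g b * (f c)⁻¹ * (f a)⁻¹ * (g a * g c) := e3
  rw [commute_iff_eq]
  calc ((f c)⁻¹ * ((f a)⁻¹ * g a) * f c) * ((f c)⁻¹ * (g b)⁻¹ * f c * g b)
      = ((f c)⁻¹ * (g b)⁻¹ * (f a)⁻¹ * g b) *
          (((g b)⁻¹ * f a * g b * (f a)⁻¹ * g a) * ((g b)⁻¹ * f c * g b * (f c)⁻¹ * g c)) *
          ((g c)⁻¹ * f c) := by group
    _ = ((f c)⁻¹ * (g b)⁻¹ * (f a)⁻¹ * g b) *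
          ((g b)⁻¹ * (f a * f c) * g b * (f c)⁻¹ * (f a)⁻¹ * (g a * g c)) *
          ((g c)⁻¹ * f c) := by rw [ss]
    _ = ((f c)⁻¹ * (g b)⁻¹ * f c * g b) * ((f c)⁻¹ * ((f a)⁻¹ * g a) * f c) := by group

/-- Key commutation: `l(a)` commutes with `[g b, f c]`. -/
lemma keyComm (a b c : H) :
    Commute ((f a)⁻¹ * g a) ((g b)⁻¹ * (f c)⁻¹ * g b * f c) := by
  have h := (hSB f g hc a b c⁻¹).eq
  simp only [map_inv, inv_inv] at h
  rw [commute_iff_eq]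
  calc ((f a)⁻¹ * g a) * ((g b)⁻¹ * (f c)⁻¹ * g b * f c)
      = (f c)⁻¹ * ((f c * ((f a)⁻¹ * g a) * (f c)⁻¹) * (f c * (g b)⁻¹ * (f c)⁻¹ * g b)) * f c := by
        group
    _ = (f c)⁻¹ * ((f c * (g b)⁻¹ * (f c)⁻¹ * g b) * (f c * ((f a)⁻¹ * g a) * (f c)⁻¹)) * f c := by
        rw [h]
    _ = ((g b)⁻¹ * (f c)⁻¹ * g b * f c) * ((f a)⁻¹ * g a) := by group

end Words

end ChiAux



namespace ChiAux

variable {G : Type*} [Group G]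

lemma commute_conjtest {x y : G} (z : G) (h : Commute x y) :
    Commute (z * x * z⁻¹) (z * y * z⁻¹) := by
  rw [commute_iff_eq]
  calc (z * x * z⁻¹) * (z * y * z⁻¹) = z * (x * y) * z⁻¹ := by group
    _ = z * (y * x) * z⁻¹ := by rw [h.eq]
    _ = (z * y * z⁻¹) * (z * x * z⁻¹) := by group

/-- If conjugation by `x` sends a generating set of `K = closure T` into `K`,
it sends all of `K` into `K`. -/
lemma conj_mem_of_gen {T : Set G} {x : G} (h : ∀ t ∈ T, x * t * x⁻¹ ∈ closure T) :
    ∀ g ∈ closure T, x * g * x⁻¹ ∈ closure T := by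
  intro g hg
  have hle : (closure T).map (MulAut.conj x).toMonoidHom ≤ closure T := by
    rw [MonoidHom.map_closure]
    refine closure_le _ |>.mpr ?_
    rintro y ⟨t, ht, rfl⟩
    simpa [MulAut.conj_apply, mul_assoc] using h t ht
  refine hle ⟨g, hg, ?_⟩
  simp [MulAut.conj_apply, mul_assoc]

/-- A subgroup is normal as soon as conjugation by each member of a generating
set `S` of the whole group (both ways) preserves it. -/
lemma normal_of_conjGen {K : Subgroup G} {S : Set G} (hS : closure S = ⊤)
    (h : ∀ x ∈ S, (∀ k ∈ K, x * k * x⁻¹ ∈ K) ∧ (∀ k ∈ K, x⁻¹ * k * x ∈ K)) : K.Normal := by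
  rw [← normalizer_eq_top_iff]
  refine top_unique ?_
  rw [← hS]
  refine (closure_le _).mpr fun x hx => ?_
  rw [SetLike.mem_coe, mem_normalizer_iff]
  intro g
  constructor
  · intro hg
    have := (h x hx).1 (x * g * x⁻¹) (by simpa [mul_assoc] using (h x hx).1 g hg)
    simpa [mul_assoc] using (h x hx).1 g hg
  · intro hg
    have := (h x hx).2 _ hg
    simpa [mul_assoc] using this

/-- `⁅A, B⁆` is normal whenever `A ⊔ B = ⊤`. -/
lemma commutator_normal_of_sup (A B : Subgroup G) (h : A ⊔ B = ⊤) : ⁅A, B⁆.Normal := by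
  rw [← normalizer_eq_top_iff]
  refine top_unique ?_
  rw [← h]
  refine sup_le ?_ ?_
  · intro a ha
    rw [mem_normalizer_iff]
    have key : ∀ c ∈ A, ∀ g ∈ ⁅A, B⁆, c * g * c⁻¹ ∈ ⁅A, B⁆ := by
      intro c hc g hg
      rw [Subgroup.commutator_def] at hg ⊢
      refine conj_mem_of_gen ?_ g hg
      rintro t ⟨x, hx, z, hz, rfl⟩
      have hid : c * ⁅x, z⁆ * c⁻¹ = ⁅c * x, z⁆ * ⁅c, z⁆⁻¹ := by
        simp only [commutatorElement_def]; group
      rw [hid, ← Subgroup.commutator_def]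
      exact mul_mem (commutator_mem_commutator (mul_mem hc hx) hz)
        (inv_mem (commutator_mem_commutator hc hz))
    intro g
    constructor
    · exact fun hg => key a ha g hg
    · intro hg
      have := key a⁻¹ (inv_mem ha) _ hg
      simpa [mul_assoc] using this
  · intro b hb
    rw [mem_normalizer_iff]
    have key : ∀ c ∈ B, ∀ g ∈ ⁅A, B⁆, c * g * c⁻¹ ∈ ⁅A, B⁆ := by
      intro c hc g hg
      rw [Subgroup.commutator_def] at hg ⊢
      refine conj_mem_of_gen ?_ g hg
      rintro t ⟨x, hx, z, hz, rfl⟩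
      have hid : c * ⁅x, z⁆ * c⁻¹ = ⁅x, c⁆⁻¹ * ⁅x, c * z⁆ := by
        simp only [commutatorElement_def]; group
      rw [hid, ← Subgroup.commutator_def]
      exact mul_mem (inv_mem (commutator_mem_commutator hx hc))
        (commutator_mem_commutator hx (mul_mem hc hz))
    intro g
    constructor
    · exact fun hg => key b hb g hg
    · intro hg
      have := key b⁻¹ (inv_mem hb) _ hg
      simpa [mul_assoc] using this

end ChiAux

namespace ChiAux

variable (H : Type*) [Group H]

lemma chi_comm : ∀ h : H, Commute (chiIota H h) (chiPsi H h) := by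
  intro h
  rw [← commutatorElement_eq_one_iff_commute]
  have : ⁅chiIota H h, chiPsi H h⁆
      = (QuotientGroup.mk' (Subgroup.normalClosure (chiRel H)))
          ⁅(Monoid.Coprod.inl h : Monoid.Coprod H H), Monoid.Coprod.inr h⁆ := by
    rw [map_commutatorElement]; rfl
  rw [this]
  rw [show (1 : chi H) = (QuotientGroup.mk' (Subgroup.normalClosure (chiRel H))) 1 from (map_one _).symm]
  refine (QuotientGroup.mk'_eq_mk' _).mpr ?_
  exact ⟨⁅(Monoid.Coprod.inl h : Monoid.Coprod H H), Monoid.Coprod.inr h⁆⁻¹,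
    Subgroup.inv_mem _ (Subgroup.subset_normalClosure ⟨h, rfl⟩), by group⟩

lemma chi_sup_top : chiH H ⊔ chiHpsi H = ⊤ := by
  have h1 : chiH H = (Monoid.Coprod.inl.range).map (QuotientGroup.mk' (Subgroup.normalClosure (chiRel H))) := by
    rw [chiH, chiIota]; exact MonoidHom.range_comp _ _
  have h2 : chiHpsi H = (Monoid.Coprod.inr.range).map (QuotientGroup.mk' (Subgroup.normalClosure (chiRel H))) := by
    rw [chiHpsi, chiPsi]; exact MonoidHom.range_comp _ _
  rw [h1, h2]
  exact (Subgroup.map_sup _ _ _).symm.trans (by rw [Monoid.Coprod.range_inl_sup_range_inr,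
    Subgroup.map_top_of_surjective _ (QuotientGroup.mk'_surjective _)]; rfl)

/-- the retraction χ(H) → H sending both copies identically. -/
noncomputable def piRetr : chi H →* H :=
  QuotientGroup.lift _ (Monoid.Coprod.lift (MonoidHom.id H) (MonoidHom.id H)) (by
    refine Subgroup.normalClosure_le_normal ?_
    rintro x ⟨h, rfl⟩
    rw [SetLike.mem_coe, MonoidHom.mem_ker, map_commutatorElement]
    simp)

@[simp] lemma piRetr_iota (h : H) : piRetr H (chiIota H h) = h := by
  rfl

@[simp] lemma piRetr_psi (h : H) : piRetr H (chiPsi H h) = h := by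
  rfl

end ChiAux

namespace ChiAux

variable (H : Type*) [Group H]

local notation "ι" => chiIota H
local notation "ψ" => chiPsi H

lemma lmem (h : H) : (ι h)⁻¹ * ψ h ∈ Lsub H :=
  Subgroup.subset_closure ⟨h, rfl⟩

lemma iota_mem (h : H) : ι h ∈ chiH H := ⟨h, rfl⟩
lemma psi_mem (h : H) : ψ h ∈ chiHpsi H := ⟨h, rfl⟩

/-- `[D, L] = 1`. -/
lemma DL_bot : ⁅Dsub H, Lsub H⁆ = ⊥ := by
  rw [Subgroup.commutator_eq_bot_iff_le_centralizer, Dsub]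
  rw [Subgroup.commutator_le]
  rintro x ⟨a, rfl⟩ y ⟨b, rfl⟩
  rw [Subgroup.mem_centralizer_iff]
  intro z hz
  rw [SetLike.mem_coe] at hz
  have key : ∀ w ∈ Lsub H, Commute w ⁅ι a, ψ b⁆ := by
    intro w hw
    rw [Lsub] at hw
    induction hw using Subgroup.closure_induction with
    | mem x hx =>
      obtain ⟨h, rfl⟩ := hx
      have hk := keyComm (chiIota H) (chiPsi H) (chi_comm H) h b⁻¹ a⁻¹
      simp only [map_inv, inv_inv] at hk
      have hk' : Commute ((ι h)⁻¹ * ψ h) ⁅ψ b, ι a⁆ := by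
        rw [commutatorElement_def]; exact hk
      have := hk'.inv_right
      rwa [commutatorElement_inv] at this
    | one => exact Commute.one_left _
    | mul x y hx hy px py => exact px.mul_left py
    | inv x hx px => exact px.inv_left
  exact (key z hz).eq

lemma comm_DL : ∀ d ∈ Dsub H, ∀ z ∈ Lsub H, Commute d z := by
  intro d hd z hz
  have h := DL_bot H
  rw [Subgroup.commutator_eq_bot_iff_le_centralizer] at h
  exact ((Subgroup.mem_centralizer_iff.mp (h hd)) z hz).symm

lemma gen_closure_top : Subgroup.closure ((chiH H : Set (chi H)) ∪ (chiHpsi H : Set (chi H))) = ⊤ := by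
  rw [Subgroup.closure_union, Subgroup.closure_eq, Subgroup.closure_eq, chi_sup_top]

/-- normality test via the two canonical families of generators of `χ(H)`. -/
lemma chi_normal_of_conj {K : Subgroup (chi H)}
    (hι : ∀ k : H, ∀ t ∈ K, ι k * t * (ι k)⁻¹ ∈ K)
    (hψ : ∀ k : H, ∀ t ∈ K, ψ k * t * (ψ k)⁻¹ ∈ K) : K.Normal := by
  refine normal_of_conjGen (gen_closure_top H) ?_
  rintro x (hx | hx) <;> rw [SetLike.mem_coe] at hx
  · obtain ⟨k, rfl⟩ := hx
    refine ⟨hι k, fun t ht => ?_⟩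
    simpa [map_inv] using hι k⁻¹ t ht
  · obtain ⟨k, rfl⟩ := hx
    refine ⟨hψ k, fun t ht => ?_⟩
    simpa [map_inv] using hψ k⁻¹ t ht

lemma Lnormal : (Lsub H).Normal := by
  have conjI : ∀ k : H, ∀ z ∈ Lsub H, ι k * z * (ι k)⁻¹ ∈ Lsub H := by
    intro k
    rw [Lsub]
    refine conj_mem_of_gen ?_
    rintro t ⟨h, rfl⟩
    have hid : ι k * ((ι h)⁻¹ * ψ h) * (ι k)⁻¹
        = ((ι (h * k⁻¹))⁻¹ * ψ (h * k⁻¹)) * ((ι k⁻¹)⁻¹ * ψ k⁻¹)⁻¹ := by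
      simp only [map_mul, map_inv]; group
    rw [hid]
    exact mul_mem (Subgroup.subset_closure ⟨h * k⁻¹, rfl⟩)
      (inv_mem (Subgroup.subset_closure ⟨k⁻¹, rfl⟩))
  refine chi_normal_of_conj H conjI ?_
  intro k z hz
  have hid : ψ k * z * (ψ k)⁻¹
      = ι k * ((((ι k)⁻¹ * ψ k) * z * ((ι k)⁻¹ * ψ k)⁻¹)) * (ι k)⁻¹ := by group
  rw [hid]
  exact conjI k _ (mul_mem (mul_mem (lmem H k) hz) (inv_mem (lmem H k)))

lemma chiH_sup_L_top : chiH H ⊔ Lsub H = ⊤ := by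
  refine top_unique ?_
  rw [← chi_sup_top H]
  refine sup_le le_sup_left ?_
  rintro x ⟨b, rfl⟩
  have : ψ b = ι b * ((ι b)⁻¹ * ψ b) := by group
  rw [this]
  exact mul_mem (Subgroup.mem_sup_left ⟨b, rfl⟩) (Subgroup.mem_sup_right (lmem H b))

lemma Tnormal : (⁅chiH H, Lsub H⁆ : Subgroup (chi H)).Normal :=
  commutator_normal_of_sup _ _ (chiH_sup_L_top H)

lemma TleL : ⁅chiH H, Lsub H⁆ ≤ Lsub H :=
  haveI := Lnormal H
  Subgroup.commutator_le_right _ _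

lemma RleL : Rsub H ≤ Lsub H := by
  haveI := Lnormal H
  rw [Rsub]
  exact (Subgroup.commutator_mono (TleL H) le_rfl).trans (Subgroup.commutator_le_left _ _)

lemma Dnormal : (Dsub H).Normal := by
  rw [Dsub]; exact commutator_normal_of_sup _ _ (chi_sup_top H)

lemma Rnormal : (Rsub H).Normal := by
  have conjI : ∀ k : H, ∀ r ∈ Rsub H, ι k * r * (ι k)⁻¹ ∈ Rsub H := by
    intro k
    rw [Rsub, Subgroup.commutator_def ⁅chiH H, Lsub H⁆ (chiHpsi H)]
    refine conj_mem_of_gen ?_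
    rintro t ⟨u, hu, w, ⟨b, rfl⟩, rfl⟩
    rw [conjugate_commutatorElement]
    have hu' : ι k * u * (ι k)⁻¹ ∈ ⁅chiH H, Lsub H⁆ := (Tnormal H).conj_mem u hu (ι k)
    have hv : ι k * ψ b * (ι k)⁻¹ = ψ b * ⁅ψ b⁻¹, ι k⁆ := by
      simp only [commutatorElement_def, map_inv]; group
    have hd : ⁅ψ b⁻¹, ι k⁆ ∈ Dsub H := by
      rw [Dsub, Subgroup.commutator_comm]
      exact Subgroup.commutator_mem_commutator ⟨b⁻¹, rfl⟩ ⟨k, rfl⟩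
    have hcm : Commute (ι k * u * (ι k)⁻¹) ⁅ψ b⁻¹, ι k⁆ :=
      ((comm_DL H) _ hd _ (TleL H hu')).symm
    have heq : ⁅ι k * u * (ι k)⁻¹, ψ b * ⁅ψ b⁻¹, ι k⁆⁆ = ⁅ι k * u * (ι k)⁻¹, ψ b⁆ := by
      have hcz := hcm.inv_left.eq
      simp only [commutatorElement_def]
      calc (ι k * u * (ι k)⁻¹) * (ψ b * ⁅ψ b⁻¹, ι k⁆) * (ι k * u * (ι k)⁻¹)⁻¹ *
            (ψ b * ⁅ψ b⁻¹, ι k⁆)⁻¹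
          = (ι k * u * (ι k)⁻¹) * ψ b * (⁅ψ b⁻¹, ι k⁆ * (ι k * u * (ι k)⁻¹)⁻¹) *
            ⁅ψ b⁻¹, ι k⁆⁻¹ * (ψ b)⁻¹ := by group
        _ = (ι k * u * (ι k)⁻¹) * ψ b * ((ι k * u * (ι k)⁻¹)⁻¹ * ⁅ψ b⁻¹, ι k⁆) *
            ⁅ψ b⁻¹, ι k⁆⁻¹ * (ψ b)⁻¹ := by rw [hcz]
        _ = (ι k * u * (ι k)⁻¹) * ψ b * (ι k * u * (ι k)⁻¹)⁻¹ * (ψ b)⁻¹ := by group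
    rw [hv, heq]
    exact Subgroup.subset_closure ⟨_, hu', ψ b, ⟨b, rfl⟩, rfl⟩
  refine chi_normal_of_conj H conjI ?_
  intro k
  rw [Rsub, Subgroup.commutator_def ⁅chiH H, Lsub H⁆ (chiHpsi H)]
  refine conj_mem_of_gen ?_
  rintro t ⟨u, hu, w, ⟨b, rfl⟩, rfl⟩
  rw [conjugate_commutatorElement]
  have h2 : ψ k * ψ b * (ψ k)⁻¹ = ψ (k * b * k⁻¹) := by
    simp only [map_mul, map_inv]
  rw [h2]
  exact Subgroup.subset_closure ⟨_, (Tnormal H).conj_mem u hu (ψ k), ψ (k * b * k⁻¹),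
    ⟨k * b * k⁻¹, rfl⟩, rfl⟩

/-- `K = H ⊔ D` is normal. -/
lemma Knormal : (chiH H ⊔ Dsub H).Normal := by
  have hcl : Subgroup.closure ((chiH H : Set (chi H)) ∪ (Dsub H : Set (chi H)))
      = chiH H ⊔ Dsub H := by
    rw [Subgroup.closure_union, Subgroup.closure_eq, Subgroup.closure_eq]
  have conjI : ∀ k : H, ∀ t ∈ chiH H ⊔ Dsub H, ι k * t * (ι k)⁻¹ ∈ chiH H ⊔ Dsub H := by
    intro k t ht
    rw [← hcl] at ht ⊢
    refine conj_mem_of_gen ?_ t ht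
    rintro s (hs | hs) <;> rw [SetLike.mem_coe] at hs
    · obtain ⟨a, rfl⟩ := hs
      have : ι k * ι a * (ι k)⁻¹ = ι (k * a * k⁻¹) := by simp only [map_mul, map_inv]
      rw [this]
      exact Subgroup.subset_closure (Or.inl ⟨k * a * k⁻¹, rfl⟩)
    · exact Subgroup.subset_closure (Or.inr (SetLike.mem_coe.mpr
        ((Dnormal H).conj_mem _ hs (ι k))))
  have conjP : ∀ k : H, ∀ t ∈ chiH H ⊔ Dsub H, ψ k * t * (ψ k)⁻¹ ∈ chiH H ⊔ Dsub H := by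
    intro k t ht
    rw [← hcl] at ht ⊢
    refine conj_mem_of_gen ?_ t ht
    rintro s (hs | hs) <;> rw [SetLike.mem_coe] at hs
    · obtain ⟨a, rfl⟩ := hs
      have : ψ k * ι a * (ψ k)⁻¹ = ι a * ⁅ι a⁻¹, ψ k⁆ := by
        simp only [commutatorElement_def, map_inv]; group
      rw [this]
      refine mul_mem (Subgroup.subset_closure (Or.inl ⟨a, rfl⟩))
        (Subgroup.subset_closure (Or.inr ?_))
      rw [SetLike.mem_coe, Dsub]
      exact Subgroup.commutator_mem_commutator ⟨a⁻¹, rfl⟩ ⟨k, rfl⟩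
    · exact Subgroup.subset_closure (Or.inr (SetLike.mem_coe.mpr
        ((Dnormal H).conj_mem _ hs (ψ k))))
  exact chi_normal_of_conj H conjI conjP

lemma TleK : ⁅chiH H, Lsub H⁆ ≤ chiH H ⊔ Dsub H := by
  rw [Subgroup.commutator_le]
  intro x hx y hy
  have : ⁅x, y⁆ = x * (y * x⁻¹ * y⁻¹) := by
    simp only [commutatorElement_def]; group
  rw [this]
  exact mul_mem (Subgroup.mem_sup_left hx)
    ((Knormal H).conj_mem _ (Subgroup.mem_sup_left (inv_mem hx)) y)

lemma RleD : Rsub H ≤ Dsub H := by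
  rw [Rsub, Subgroup.commutator_le]
  intro u hu w hw
  obtain ⟨b, rfl⟩ := hw
  have hu' : u ∈ chiH H ⊔ Dsub H := TleK H hu
  have hcl : Subgroup.closure ((chiH H : Set (chi H)) ∪ (Dsub H : Set (chi H)))
      = chiH H ⊔ Dsub H := by
    rw [Subgroup.closure_union, Subgroup.closure_eq, Subgroup.closure_eq]
  clear hu
  rw [← hcl] at hu'
  induction hu' using Subgroup.closure_induction with
  | mem x hx =>
    rcases hx with hx | hx <;> rw [SetLike.mem_coe] at hx
    · obtain ⟨a, rfl⟩ := hx
      rw [Dsub]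
      exact Subgroup.commutator_mem_commutator ⟨a, rfl⟩ ⟨b, rfl⟩
    · have : ⁅x, ψ b⁆ = x * (ψ b * x⁻¹ * (ψ b)⁻¹) := by
        simp only [commutatorElement_def]; group
      rw [this]
      exact mul_mem hx ((Dnormal H).conj_mem _ (inv_mem hx) (ψ b))
  | one => rw [commutatorElement_one_left]; exact one_mem _
  | mul x y hx hy px py =>
    have : ⁅x * y, ψ b⁆ = (x * ⁅y, ψ b⁆ * x⁻¹) * ⁅x, ψ b⁆ := by
      simp only [commutatorElement_def]; group
    rw [this]
    exact mul_mem ((Dnormal H).conj_mem _ py x) px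
  | inv x hx px =>
    have : ⁅x⁻¹, ψ b⁆ = x⁻¹ * ⁅x, ψ b⁆⁻¹ * x := by
      simp only [commutatorElement_def]; group
    rw [this]
    have := (Dnormal H).conj_mem _ (inv_mem px) x⁻¹
    simpa [inv_inv] using this

end ChiAux

namespace ChiAux

variable (H : Type*) [Group H]

local notation "ι" => chiIota H
local notation "ψ" => chiPsi H

lemma EleChiH : ⁅chiH H, chiH H⁆ ≤ chiH H := by
  rw [Subgroup.commutator_le]
  intro x hx y hy
  simp only [commutatorElement_def]
  exact mul_mem (mul_mem (mul_mem hx hy) (inv_mem hx)) (inv_mem hy)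

lemma DleET : Dsub H ≤ ⁅chiH H, chiH H⁆ ⊔ ⁅chiH H, Lsub H⁆ := by
  rw [Dsub, Subgroup.commutator_le]
  rintro x ⟨a, rfl⟩ y ⟨b, rfl⟩
  have key : ⁅ι a, ψ b⁆ = ⁅ι a, ι b⁆ * (ι b * ⁅ι a, (ι b)⁻¹ * ψ b⁆ * (ι b)⁻¹) := by
    simp only [commutatorElement_def]; group
  rw [key]
  refine mul_mem (Subgroup.mem_sup_left
      (Subgroup.commutator_mem_commutator ⟨a, rfl⟩ ⟨b, rfl⟩))
    (Subgroup.mem_sup_right ((Tnormal H).conj_mem _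
      (Subgroup.commutator_mem_commutator ⟨a, rfl⟩ (lmem H b)) (ι b)))

lemma LleKer : Lsub H ≤ (piRetr H).ker := by
  rw [Lsub, Subgroup.closure_le]
  rintro x ⟨h, rfl⟩
  simp [MonoidHom.mem_ker]

lemma TleKer : ⁅chiH H, Lsub H⁆ ≤ (piRetr H).ker := by
  rw [Subgroup.commutator_le]
  intro x hx y hy
  rw [MonoidHom.mem_ker, map_commutatorElement]
  have : piRetr H y = 1 := LleKer H hy
  rw [this, commutatorElement_one_right]

lemma WleT : Wsub H ≤ ⁅chiH H, Lsub H⁆ := by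
  intro w hw
  rw [Wsub, Subgroup.mem_inf] at hw
  obtain ⟨hwL, hwD⟩ := hw
  have hw2 : w ∈ ⁅chiH H, chiH H⁆ ⊔ ⁅chiH H, Lsub H⁆ := DleET H hwD
  haveI := Tnormal H
  rw [← SetLike.mem_coe, Subgroup.mul_normal] at hw2
  obtain ⟨e, he, t, ht, rfl⟩ := hw2
  obtain ⟨x, rfl⟩ := EleChiH H he
  have hx1 : piRetr H (ι x * t) = 1 := LleKer H hwL
  rw [map_mul, piRetr_iota] at hx1
  have ht1 : piRetr H t = 1 := TleKer H ht
  rw [ht1, mul_one] at hx1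
  subst hx1
  simpa using ht

lemma WHleR : ⁅Wsub H, chiH H⁆ ≤ Rsub H := by
  rw [Subgroup.commutator_le]
  rintro w hw x ⟨h, rfl⟩
  have hwD : w ∈ Dsub H := by
    rw [Wsub, Subgroup.mem_inf] at hw; exact hw.2
  have hcm : Commute w ((ι h)⁻¹ * ψ h) := comm_DL H _ hwD _ (lmem H h)
  have heq : ⁅w, ι h⁆ = ⁅w, ψ h⁆ := by
    have hcz := hcm.inv_left.eq
    simp only [commutatorElement_def]
    calc w * ι h * w⁻¹ * (ι h)⁻¹
        = w * ι h * (w⁻¹ * ((ι h)⁻¹ * ψ h)) * (ψ h)⁻¹ := by group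
      _ = w * ι h * (((ι h)⁻¹ * ψ h) * w⁻¹) * (ψ h)⁻¹ := by rw [hcz]
      _ = w * ψ h * w⁻¹ * (ψ h)⁻¹ := by group
  rw [heq, Rsub]
  exact Subgroup.commutator_mem_commutator (WleT H hw) ⟨h, rfl⟩

lemma RleW : Rsub H ≤ Wsub H := by
  rw [Wsub]
  exact le_inf (RleL H) (RleD H)

lemma WleD : Wsub H ≤ Dsub H := by
  rw [Wsub]; exact inf_le_right

/-- the swap invariance. -/
lemma Rswap (σ : chi H ≃* chi H) (hι : ∀ h : H, σ (ι h) = ψ h)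
    (hψ : ∀ h : H, σ (ψ h) = ι h) :
    (Rsub H).map (σ : chi H →* chi H) = Rsub H := by
  haveI := Rnormal H
  have hmapH : (chiH H).map (σ : chi H →* chi H) = chiHpsi H := by
    rw [chiH, MonoidHom.map_range]
    have : (σ : chi H →* chi H).comp (chiIota H) = chiPsi H := MonoidHom.ext hι
    rw [this, chiHpsi]
  have hmapP : (chiHpsi H).map (σ : chi H →* chi H) = chiH H := by
    rw [chiHpsi, MonoidHom.map_range]
    have : (σ : chi H →* chi H).comp (chiPsi H) = chiIota H := MonoidHom.ext hψ
    rw [this, chiH]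
  have hmapL : (Lsub H).map (σ : chi H →* chi H) = Lsub H := by
    rw [Lsub, MonoidHom.map_closure]
    refine le_antisymm ?_ ?_
    · rw [Subgroup.closure_le]
      rintro y ⟨x, ⟨h, rfl⟩, rfl⟩
      have hval : (σ : chi H →* chi H) ((ι h)⁻¹ * ψ h) = ((ι h)⁻¹ * ψ h)⁻¹ := by
        simp only [map_mul, map_inv, MonoidHom.coe_coe, hι, hψ]
        group
      rw [SetLike.mem_coe, hval]
      exact inv_mem (lmem H h)
    · rw [Subgroup.closure_le]
      rintro x ⟨h, rfl⟩
      have hval : (ι h)⁻¹ * ψ h = ((σ : chi H →* chi H) ((ι h)⁻¹ * ψ h))⁻¹ := by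
        simp only [map_mul, map_inv, MonoidHom.coe_coe, hι, hψ]
        group
      rw [SetLike.mem_coe, hval]
      exact inv_mem (Subgroup.subset_closure ⟨_, ⟨h, rfl⟩, rfl⟩)
  have hmapR : (Rsub H).map (σ : chi H →* chi H) = ⁅⁅chiHpsi H, Lsub H⁆, chiH H⁆ := by
    rw [Rsub, Subgroup.map_commutator, Subgroup.map_commutator, hmapH, hmapL, hmapP]
  -- three subgroups lemma in χ/R
  have hle : ⁅⁅chiHpsi H, Lsub H⁆, chiH H⁆ ≤ Rsub H := by
    set q := QuotientGroup.mk' (Rsub H)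
    have hker : (Rsub H) ≤ q.ker := by rw [QuotientGroup.ker_mk']
    have h1 : ⁅⁅(Lsub H).map q, (chiH H).map q⁆, (chiHpsi H).map q⁆ = ⊥ := by
      rw [← Subgroup.map_commutator, ← Subgroup.map_commutator,
        Subgroup.commutator_comm (Lsub H) (chiH H), ← Rsub, Subgroup.map_eq_bot_iff]
      exact hker
    have h2 : ⁅⁅(chiH H).map q, (chiHpsi H).map q⁆, (Lsub H).map q⁆ = ⊥ := by
      rw [← Subgroup.map_commutator, ← Subgroup.map_commutator, ← Dsub, DL_bot,
        Subgroup.map_bot]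
    have h3 := Subgroup.commutator_commutator_eq_bot_of_rotate h1 h2
    rw [← Subgroup.map_commutator, ← Subgroup.map_commutator, Subgroup.map_eq_bot_iff] at h3
    exact h3.trans_eq (QuotientGroup.ker_mk' _)
  have hmap2 : (⁅⁅chiHpsi H, Lsub H⁆, chiH H⁆ : Subgroup (chi H)).map (σ : chi H →* chi H)
      = Rsub H := by
    rw [Subgroup.map_commutator, Subgroup.map_commutator, hmapP, hmapL, hmapH, Rsub]
  have hge : Rsub H ≤ (Rsub H).map (σ : chi H →* chi H) := by
    have := Subgroup.map_mono (f := (σ : chi H →* chi H)) hle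
    rwa [hmap2] at this
  exact le_antisymm (hmapR ▸ hle) hge

end ChiAux

/-- Lemma 1 (i), (ii), (iv): R(H) is normal in χ(H) and invariant under the
automorphism of χ(H) swapping H and H^ψ; moreover
[W(H), H] ≤ R(H) ≤ W(H) ≤ D(H) and D(H) centralizes L(H). -/
theorem stmt_0 (H : Type*) [Group H] :
    (Rsub H).Normal ∧
    (∀ σ : chi H ≃* chi H,
        (∀ h : H, σ (chiIota H h) = chiPsi H h) →
        (∀ h : H, σ (chiPsi H h) = chiIota H h) →
        (Rsub H).map (σ : chi H →* chi H) = Rsub H) ∧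
    ⁅Wsub H, chiH H⁆ ≤ Rsub H ∧
    Rsub H ≤ Wsub H ∧
    Wsub H ≤ Dsub H ∧
    ⁅Dsub H, Lsub H⁆ = ⊥ := by
  exact ⟨ChiAux.Rnormal H, ChiAux.Rswap H, ChiAux.WHleR H, ChiAux.RleW H, ChiAux.WleD H,
    ChiAux.DL_bot H⟩
end

section
/- In the weak commutativity group χ(H) of a group H, for all h₁, h₂, h₃ ∈ H one has [h₁, h₂^ψ]^{h₃} = [h₁, h₂^ψ]^{h₃^ψ}, and the congruence [h₁, h₂^ψ]^{h₃} ≡ [h₁^{h₃}, (h₂^{h₃})^ψ] holds modulo R(H), i.e. [h₁, h₂^ψ]^{h₃}·[h₁^{h₃}, (h₂^{h₃})^ψ]⁻¹ ∈ R(H). -/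
open Subgroup
open scoped commutatorElement

section GeneralAux

variable {H G : Type*} [Group H] [Group G] (i p : H →* G)

/-- Symmetry lemma: ⁅a, bᵖ⁆ = ⁅aᵖ, b⁆ (Sidki's Lemma). -/
theorem aux_T (hc : ∀ h : H, Commute (i h) (p h)) (a b : H) :
    ⁅i a, p b⁆ = ⁅p a, i b⁆ := by
  have hCA : (p a)⁻¹ * i a = i a * (p a)⁻¹ := ((hc a).symm.inv_left).eq
  have hDB : (p b)⁻¹ * i b = i b * (p b)⁻¹ := ((hc b).symm.inv_left).eq
  have r3 : (i a)⁻¹ * i b * ((p a)⁻¹ * p b) = (p a)⁻¹ * p b * ((i a)⁻¹ * i b) := by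
    have := (hc (a⁻¹ * b)).eq
    simpa [map_mul, map_inv] using this
  have main : (p a)⁻¹ * (i a * p b * (i a)⁻¹ * (p b)⁻¹) * i b = i b * (p a)⁻¹ := by
    calc (p a)⁻¹ * (i a * p b * (i a)⁻¹ * (p b)⁻¹) * i b
        = ((p a)⁻¹ * i a) * p b * (i a)⁻¹ * ((p b)⁻¹ * i b) := by group
      _ = (i a * (p a)⁻¹) * p b * (i a)⁻¹ * (i b * (p b)⁻¹) := by rw [hCA, hDB]
      _ = i a * (((p a)⁻¹ * p b) * ((i a)⁻¹ * i b)) * (p b)⁻¹ := by group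
      _ = i a * (((i a)⁻¹ * i b) * ((p a)⁻¹ * p b)) * (p b)⁻¹ := by rw [← r3]
      _ = i b * (p a)⁻¹ := by group
  have main2 : (p a)⁻¹ * ⁅i a, p b⁆ * i b = (p a)⁻¹ * ⁅p a, i b⁆ * i b := by
    simp only [commutatorElement_def]
    rw [main]; group
  exact mul_left_cancel (mul_right_cancel main2)

/-- Part (iii): conjugation by i z and by p z agree on D-generators. -/
theorem aux_iii (hc : ∀ h : H, Commute (i h) (p h)) (x y z : H) :
    (i z)⁻¹ * ⁅i x, p y⁆ * i z = (p z)⁻¹ * ⁅i x, p y⁆ * p z := by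
  have t1 := aux_T i p hc (z⁻¹ * x) y
  simp only [map_mul, map_inv] at t1
  have t2 := aux_T i p hc x y
  have tz := aux_T i p hc z⁻¹ y
  simp only [map_inv] at tz
  have e : ((i z)⁻¹ * ⁅i x, p y⁆ * i z) * ⁅(i z)⁻¹, p y⁆ =
      ((p z)⁻¹ * ⁅i x, p y⁆ * p z) * ⁅(i z)⁻¹, p y⁆ := by
    calc ((i z)⁻¹ * ⁅i x, p y⁆ * i z) * ⁅(i z)⁻¹, p y⁆
        = ⁅(i z)⁻¹ * i x, p y⁆ := by simp only [commutatorElement_def]; group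
      _ = ⁅(p z)⁻¹ * p x, i y⁆ := t1
      _ = ((p z)⁻¹ * ⁅p x, i y⁆ * p z) * ⁅(p z)⁻¹, i y⁆ := by
          simp only [commutatorElement_def]; group
      _ = ((p z)⁻¹ * ⁅i x, p y⁆ * p z) * ⁅(i z)⁻¹, p y⁆ := by rw [← t2, ← tz]
  exact mul_right_cancel e

/-- The key free-group computation for part (v). -/
theorem aux_key {G : Type*} [Group G] (A Z P W : G) :
    W⁻¹ * ⁅A, P⁆ * W * ⁅Z⁻¹ * A * Z, W⁻¹ * P * W⁆⁻¹ =
      ⁅(Z⁻¹ * A * Z) * ⁅(Z⁻¹ * A * Z)⁻¹, (Z⁻¹ * W)⁻¹⁆ * (Z⁻¹ * A * Z)⁻¹, W⁻¹ * P * W⁆ *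
        ((W⁻¹ * P * W) *
          ⁅(Z⁻¹ * A * Z) * ⁅(Z⁻¹ * A * Z)⁻¹, (Z⁻¹ * W)⁻¹⁆ * (Z⁻¹ * A * Z)⁻¹,
            ⁅(W⁻¹ * P * W)⁻¹, Z⁻¹ * A * Z⁆⁆ * (W⁻¹ * P * W)⁻¹) := by
  simp only [commutatorElement_def, mul_inv_rev, inv_inv]
  group

end GeneralAux

theorem chi_comm (H : Type*) [Group H] (h : H) : Commute (chiIota H h) (chiPsi H h) := by
  have h1 : ⁅chiIota H h, chiPsi H h⁆ =
      QuotientGroup.mk' (Subgroup.normalClosure (chiRel H))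
        ⁅(Monoid.Coprod.inl h : Monoid.Coprod H H), Monoid.Coprod.inr h⁆ := by
    rw [map_commutatorElement]; rfl
  refine commutatorElement_eq_one_iff_commute.mp ?_
  rw [h1, QuotientGroup.mk'_apply]
  exact (QuotientGroup.eq_one_iff _).mpr (Subgroup.subset_normalClosure ⟨h, rfl⟩)

/-- conjugation x ↦ c⁻¹ x c as a hom -/
def conjHom {G : Type*} [Group G] (c : G) : G →* G where
  toFun x := c⁻¹ * x * c
  map_one' := by group
  map_mul' x y := by group

theorem Lsub_conj (H : Type*) [Group H] (u : H) :
    (Lsub H).map (conjHom (chiIota H u)) ≤ Lsub H := by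
  rw [Lsub, MonoidHom.map_closure]
  refine (Subgroup.closure_le _).2 ?_
  rintro x ⟨s, ⟨h, rfl⟩, rfl⟩
  have e : conjHom (chiIota H u) ((chiIota H h)⁻¹ * chiPsi H h) =
      ((chiIota H (h * u))⁻¹ * chiPsi H (h * u)) * ((chiIota H u)⁻¹ * chiPsi H u)⁻¹ := by
    show (chiIota H u)⁻¹ * ((chiIota H h)⁻¹ * chiPsi H h) * chiIota H u = _
    simp only [map_mul]
    group
  rw [SetLike.mem_coe, e]
  exact mul_mem (Subgroup.subset_closure ⟨h * u, rfl⟩)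
    (inv_mem (Subgroup.subset_closure ⟨u, rfl⟩))

theorem chiH_conj (H : Type*) [Group H] (u : H) :
    (chiH H).map (conjHom (chiIota H u)) ≤ chiH H := by
  rintro x ⟨g, ⟨b, rfl⟩, rfl⟩
  exact ⟨u⁻¹ * b * u, by simp only [map_mul, map_inv]; rfl⟩

theorem K_conj (H : Type*) [Group H] (u : H) :
    (⁅chiH H, Lsub H⁆ : Subgroup (chi H)).map (conjHom (chiIota H u)) ≤ ⁅chiH H, Lsub H⁆ := by
  rw [Subgroup.map_commutator]
  exact Subgroup.commutator_mono (chiH_conj H u) (Lsub_conj H u)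

theorem KleL (H : Type*) [Group H] : (⁅chiH H, Lsub H⁆ : Subgroup (chi H)) ≤ Lsub H := by
  refine (Subgroup.commutator_le).2 ?_
  rintro g₁ ⟨b, rfl⟩ g₂ hg₂
  have h1 : (chiIota H b) * g₂ * (chiIota H b)⁻¹ ∈ Lsub H := by
    have := Lsub_conj H b⁻¹ ⟨g₂, hg₂, rfl⟩
    simpa [conjHom, map_inv] using this
  have e : ⁅chiIota H b, g₂⁆ = (chiIota H b * g₂ * (chiIota H b)⁻¹) * g₂⁻¹ := by
    simp only [commutatorElement_def]
  rw [e]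
  exact mul_mem h1 (inv_mem hg₂)

theorem L_comm_gen (H : Type*) [Group H] {g : chi H} (hg : g ∈ Lsub H) (a b : H) :
    Commute g ⁅chiIota H a, chiPsi H b⁆ := by
  have hcent : Lsub H ≤ Subgroup.centralizer {⁅chiIota H a, chiPsi H b⁆} := by
    rw [Lsub]
    refine (Subgroup.closure_le _).2 ?_
    rintro s ⟨h, rfl⟩
    rw [SetLike.mem_coe, Subgroup.mem_centralizer_iff]
    rintro c hc'
    rw [Set.mem_singleton_iff] at hc'
    subst hc'
    have E1 := aux_iii (chiIota H) (chiPsi H) (chi_comm H) a b h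
    have E3 : chiPsi H h * (chiIota H h)⁻¹ * ⁅chiIota H a, chiPsi H b⁆ =
        ⁅chiIota H a, chiPsi H b⁆ * (chiPsi H h * (chiIota H h)⁻¹) := by
      calc chiPsi H h * (chiIota H h)⁻¹ * ⁅chiIota H a, chiPsi H b⁆
          = chiPsi H h * ((chiIota H h)⁻¹ * ⁅chiIota H a, chiPsi H b⁆ * chiIota H h) *
              (chiIota H h)⁻¹ := by group
        _ = chiPsi H h * ((chiPsi H h)⁻¹ * ⁅chiIota H a, chiPsi H b⁆ * chiPsi H h) *
              (chiIota H h)⁻¹ := by rw [E1]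
        _ = ⁅chiIota H a, chiPsi H b⁆ * (chiPsi H h * (chiIota H h)⁻¹) := by group
    have hAB : (chiIota H h)⁻¹ * chiPsi H h = chiPsi H h * (chiIota H h)⁻¹ :=
      ((chi_comm H h).inv_left).eq
    rw [hAB]
    exact E3.symm
  exact (Subgroup.mem_centralizer_iff.mp (hcent hg) ⁅chiIota H a, chiPsi H b⁆ rfl).symm

/-- Lemma 1 (iii), (v): for all h₁, h₂, h₃ ∈ H one has
[h₁, h₂^ψ]^{h₃} = [h₁, h₂^ψ]^{h₃^ψ}, and
[h₁, h₂^ψ]^{h₃} ≡ [h₁^{h₃}, (h₂^{h₃})^ψ] modulo R(H). -/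
theorem stmt_1 (H : Type*) [Group H] (h₁ h₂ h₃ : H) :
    (chiIota H h₃)⁻¹ * ⁅chiIota H h₁, chiPsi H h₂⁆ * chiIota H h₃ =
      (chiPsi H h₃)⁻¹ * ⁅chiIota H h₁, chiPsi H h₂⁆ * chiPsi H h₃ ∧
    ((chiIota H h₃)⁻¹ * ⁅chiIota H h₁, chiPsi H h₂⁆ * chiIota H h₃) *
        ⁅chiIota H (h₃⁻¹ * h₁ * h₃), chiPsi H (h₃⁻¹ * h₂ * h₃)⁆⁻¹ ∈ Rsub H := by

  have hX' : chiIota H (h₃⁻¹ * h₁ * h₃) =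
      (chiIota H h₃)⁻¹ * chiIota H h₁ * chiIota H h₃ := by
    simp only [map_mul, map_inv]
  have hY' : chiPsi H (h₃⁻¹ * h₂ * h₃) =
      (chiPsi H h₃)⁻¹ * chiPsi H h₂ * chiPsi H h₃ := by
    simp only [map_mul, map_inv]
  refine ⟨aux_iii (chiIota H) (chiPsi H) (chi_comm H) h₁ h₂ h₃, ?_⟩
  rw [aux_iii (chiIota H) (chiPsi H) (chi_comm H) h₁ h₂ h₃, hX', hY',
    aux_key (chiIota H h₁) (chiIota H h₃) (chiPsi H h₂) (chiPsi H h₃)]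
  set A := chiIota H h₁
  set Z := chiIota H h₃
  set P := chiPsi H h₂
  set W := chiPsi H h₃
  have hmemX : Z⁻¹ * A * Z ∈ chiH H :=
    show _ ∈ (chiIota H).range from ⟨h₃⁻¹ * h₁ * h₃, hX'⟩
  have hmemY : W⁻¹ * P * W ∈ chiHpsi H :=
    show _ ∈ (chiPsi H).range from ⟨h₃⁻¹ * h₂ * h₃, hY'⟩
  have hmemL : Z⁻¹ * W ∈ Lsub H :=
    show _ ∈ Subgroup.closure {x | ∃ h : H, x = (chiIota H h)⁻¹ * chiPsi H h} from
      Subgroup.subset_closure ⟨h₃, rfl⟩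
  have hk₇ : ⁅(Z⁻¹ * A * Z)⁻¹, (Z⁻¹ * W)⁻¹⁆ ∈ (⁅chiH H, Lsub H⁆ : Subgroup (chi H)) :=
    Subgroup.commutator_mem_commutator (inv_mem hmemX) (inv_mem hmemL)
  have hk' : (Z⁻¹ * A * Z) * ⁅(Z⁻¹ * A * Z)⁻¹, (Z⁻¹ * W)⁻¹⁆ * (Z⁻¹ * A * Z)⁻¹ ∈
      (⁅chiH H, Lsub H⁆ : Subgroup (chi H)) := by
    have e : conjHom (chiIota H ((h₃⁻¹ * h₁ * h₃)⁻¹)) ⁅(Z⁻¹ * A * Z)⁻¹, (Z⁻¹ * W)⁻¹⁆ =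
        (Z⁻¹ * A * Z) * ⁅(Z⁻¹ * A * Z)⁻¹, (Z⁻¹ * W)⁻¹⁆ * (Z⁻¹ * A * Z)⁻¹ := by
      show (chiIota H ((h₃⁻¹ * h₁ * h₃)⁻¹))⁻¹ * ⁅(Z⁻¹ * A * Z)⁻¹, (Z⁻¹ * W)⁻¹⁆ *
          chiIota H ((h₃⁻¹ * h₁ * h₃)⁻¹) = _
      rw [map_inv, hX']
      group
    rw [← e]
    exact K_conj H ((h₃⁻¹ * h₁ * h₃)⁻¹)
      (Subgroup.mem_map.mpr ⟨_, hk₇, rfl⟩)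
  have hk'L : (Z⁻¹ * A * Z) * ⁅(Z⁻¹ * A * Z)⁻¹, (Z⁻¹ * W)⁻¹⁆ * (Z⁻¹ * A * Z)⁻¹ ∈ Lsub H :=
    KleL H hk'
  have hcom : Commute ((Z⁻¹ * A * Z) * ⁅(Z⁻¹ * A * Z)⁻¹, (Z⁻¹ * W)⁻¹⁆ * (Z⁻¹ * A * Z)⁻¹)
      ⁅(W⁻¹ * P * W)⁻¹, Z⁻¹ * A * Z⁆ := by
    have hT := aux_T (chiIota H) (chiPsi H) (chi_comm H) ((h₃⁻¹ * h₂ * h₃)⁻¹) (h₃⁻¹ * h₁ * h₃)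
    have hd : ⁅(W⁻¹ * P * W)⁻¹, Z⁻¹ * A * Z⁆ =
        ⁅chiIota H ((h₃⁻¹ * h₂ * h₃)⁻¹), chiPsi H (h₃⁻¹ * h₁ * h₃)⁆ := by
      calc ⁅(W⁻¹ * P * W)⁻¹, Z⁻¹ * A * Z⁆
          = ⁅chiPsi H ((h₃⁻¹ * h₂ * h₃)⁻¹), chiIota H (h₃⁻¹ * h₁ * h₃)⁆ := by
            rw [map_inv, hY', hX']
        _ = ⁅chiIota H ((h₃⁻¹ * h₂ * h₃)⁻¹), chiPsi H (h₃⁻¹ * h₁ * h₃)⁆ := hT.symm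
    rw [hd]
    exact L_comm_gen H hk'L _ _
  rw [commutatorElement_eq_one_iff_commute.mpr hcom, mul_one, mul_inv_cancel, mul_one]
  exact Subgroup.commutator_mem_commutator hk' hmemY
end

section
/- For any group H, the abelianization L(H)/L(H)′ of the subgroup L(H) of the weak commutativity group χ(H) is isomorphic to the additive quotient group A_ℤ(H)/I₂(H). -/
open Subgroup
open scoped commutatorElement

open MonoidAlgebra

/-- The augmentation ideal A_ℤ(H) of the integral group ring ℤ(H),
generated by {h - 1 : h ∈ H}. -/
noncomputable def augIdeal (H : Type*) [Group H] : Ideal (MonoidAlgebra ℤ H) :=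
  Ideal.span {x | ∃ h : H, x = MonoidAlgebra.of ℤ H h - 1}

/-- The two-sided ideal I₂(H) of ℤ(H) generated by {(h - 1)² : h ∈ H}
(realized as the left span of all right multiples of the generators). -/
noncomputable def ideal2 (H : Type*) [Group H] : Ideal (MonoidAlgebra ℤ H) :=
  Ideal.span {x | ∃ (h : H) (b : MonoidAlgebra ℤ H),
    x = (MonoidAlgebra.of ℤ H h - 1) ^ 2 * b}

namespace Stmt7

variable {H : Type*} [Group H]

noncomputable def lel (h : H) : chi H := (chiIota H h)⁻¹ * chiPsi H h

lemma comm_rel (h : H) : chiIota H h * chiPsi H h = chiPsi H h * chiIota H h := by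
  have hm : (⁅(Monoid.Coprod.inl h : Monoid.Coprod H H), Monoid.Coprod.inr h⁆ :
      Monoid.Coprod H H) ∈ Subgroup.normalClosure (chiRel H) :=
    Subgroup.subset_normalClosure ⟨h, rfl⟩
  have h1 : (QuotientGroup.mk' (Subgroup.normalClosure (chiRel H)))
      ⁅(Monoid.Coprod.inl h : Monoid.Coprod H H), Monoid.Coprod.inr h⁆ = 1 :=
    (QuotientGroup.eq_one_iff _).2 hm
  rw [map_commutatorElement] at h1
  exact (commutatorElement_eq_one_iff_mul_comm.mp h1)

lemma lel_mem (h : H) : lel h ∈ Lsub H := Subgroup.subset_closure ⟨h, rfl⟩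

lemma lel_one : lel (1 : H) = 1 := by simp [lel]

lemma lel_mul (h g : H) :
    lel (h * g) = (chiIota H g)⁻¹ * lel h * chiIota H g * lel g := by
  simp only [lel, map_mul, mul_inv_rev]
  group

lemma conj_self (h : H) : (chiIota H h)⁻¹ * lel h * chiIota H h = lel h := by
  simp only [lel, mul_assoc]
  rw [← comm_rel h]
  simp [← mul_assoc]

lemma conj_mem (g h : H) : (chiIota H g)⁻¹ * lel h * chiIota H g ∈ Lsub H := by
  have : (chiIota H g)⁻¹ * lel h * chiIota H g = lel (h * g) * (lel g)⁻¹ := by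
    rw [lel_mul]; group
  rw [this]
  exact mul_mem (lel_mem _) (inv_mem (lel_mem _))

noncomputable def mm (h : H) : Additive (Abelianization ↥(Lsub H)) :=
  Additive.ofMul (Abelianization.of ⟨lel h, lel_mem h⟩)

lemma conj_mul (g h : H) :
    (chiIota H (h * g))⁻¹ * lel h * chiIota H (h * g)
      = (chiIota H g)⁻¹ * lel h * chiIota H g := by
  calc (chiIota H (h * g))⁻¹ * lel h * chiIota H (h * g)
      = (chiIota H g)⁻¹ * ((chiIota H h)⁻¹ * lel h * (chiIota H h)) * (chiIota H g) := by
        rw [map_mul]; group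
    _ = (chiIota H g)⁻¹ * lel h * chiIota H g := by rw [conj_self]

lemma key_ab (h g : H) :
    mm (h * (h * g)) + mm g = mm (h * g) + (mm (h * g) : Additive (Abelianization ↥(Lsub H))) := by
  set C : chi H := (chiIota H g)⁻¹ * lel h * chiIota H g with hC
  have hCmem : C ∈ Lsub H := conj_mem g h
  have e1 : lel (h * g) = C * lel g := by rw [lel_mul]
  have e2 : lel (h * (h * g)) = C * lel (h * g) := by
    rw [lel_mul h (h * g), conj_mul g h, ← hC]
  have s1 : (⟨lel (h * g), lel_mem _⟩ : ↥(Lsub H)) = ⟨C, hCmem⟩ * ⟨lel g, lel_mem _⟩ :=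
    Subtype.ext e1
  have s2 : (⟨lel (h * (h * g)), lel_mem _⟩ : ↥(Lsub H))
      = ⟨C, hCmem⟩ * ⟨lel (h * g), lel_mem _⟩ := Subtype.ext e2
  simp only [mm]
  rw [s2, s1]
  simp only [map_mul, ← ofMul_mul]
  exact congrArg Additive.ofMul (by ac_rfl)

end Stmt7

namespace Stmt7

variable {H : Type*} [Group H]

noncomputable def FF (H : Type*) [Group H] :
    MonoidAlgebra ℤ H →ₗ[ℤ] Additive (Abelianization ↥(Lsub H)) :=
  (Finsupp.linearCombination ℤ (fun h : H => mm h)).comp (coeffLinearEquiv ℤ).toLinearMap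

lemma FF_of (h : H) : FF H (of ℤ H h) = mm h := by
  simp [FF, MonoidAlgebra.of_apply]

lemma single_eq (g : H) (n : ℤ) : (MonoidAlgebra.single g n : MonoidAlgebra ℤ H) = n • of ℤ H g := by
  simp [MonoidAlgebra.of_apply, MonoidAlgebra.smul_single]

lemma expand (h g : H) : (of ℤ H h - 1) ^ 2 * of ℤ H g
    = of ℤ H (h * (h * g)) - (2 : ℤ) • of ℤ H (h * g) + of ℤ H g := by
  simp only [map_mul, two_smul]
  noncomm_ring

lemma FF_gen (h g : H) : FF H ((of ℤ H h - 1) ^ 2 * of ℤ H g) = 0 := by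
  rw [expand, map_add, map_sub, map_smul, FF_of, FF_of, FF_of, two_smul,
    sub_add_eq_add_sub, key_ab, sub_self]

lemma FF_gen2 (h : H) (b : MonoidAlgebra ℤ H) : FF H ((of ℤ H h - 1) ^ 2 * b) = 0 := by
  induction b using MonoidAlgebra.induction_linear with
  | zero => simp
  | add f g hf hg => rw [mul_add, map_add, hf, hg, add_zero]
  | single g n => rw [single_eq, mul_smul_comm, map_smul, FF_gen, smul_zero]

lemma FF_conj (g h : H) : of ℤ H g * (of ℤ H h - 1) ^ 2
    = (of ℤ H (g * h * g⁻¹) - 1) ^ 2 * of ℤ H g := by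
  have e : (of ℤ H (g * h * g⁻¹) - 1) * of ℤ H g = of ℤ H g * (of ℤ H h - 1) := by
    rw [sub_mul, mul_sub, one_mul, mul_one, ← map_mul, ← map_mul]
    congr 2
    simp [mul_assoc]
  symm
  calc (of ℤ H (g * h * g⁻¹) - 1) ^ 2 * of ℤ H g
      = (of ℤ H (g * h * g⁻¹) - 1) * ((of ℤ H (g * h * g⁻¹) - 1) * of ℤ H g) := by
        rw [pow_two, mul_assoc]
    _ = (of ℤ H (g * h * g⁻¹) - 1) * (of ℤ H g * (of ℤ H h - 1)) := by rw [e]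
    _ = ((of ℤ H (g * h * g⁻¹) - 1) * of ℤ H g) * (of ℤ H h - 1) :=
        (mul_assoc _ _ _).symm
    _ = of ℤ H g * (of ℤ H h - 1) * (of ℤ H h - 1) := by rw [e]
    _ = of ℤ H g * (of ℤ H h - 1) ^ 2 := by rw [pow_two, mul_assoc]

lemma FF_ideal2 : ∀ x ∈ ideal2 H, FF H x = 0 := by
  have main : ∀ x ∈ ideal2 H, ∀ a : MonoidAlgebra ℤ H, FF H (a * x) = 0 := by
    intro x hx
    refine Submodule.span_induction ?_ ?_ ?_ ?_ hx
    · rintro y ⟨h, b, rfl⟩ a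
      induction a using MonoidAlgebra.induction_linear with
      | zero => simp
      | add f g hf hg => rw [add_mul, map_add, hf, hg, add_zero]
      | single g n =>
        rw [single_eq, smul_mul_assoc, map_smul, ← mul_assoc, FF_conj g h, mul_assoc,
          FF_gen2, smul_zero]
    · intro a; simp
    · intro y z _ _ hy hz a; rw [mul_add, map_add, hy _, hz _, add_zero]
    · intro r y _ hy a
      rw [smul_eq_mul, ← mul_assoc]
      exact hy (a * r)
  intro x hx
  have := main x hx 1
  rwa [one_mul] at this

noncomputable def Tspan (H : Type*) [Group H] : Submodule ℤ (MonoidAlgebra ℤ H) :=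
  Submodule.span ℤ {x | ∃ h : H, x = of ℤ H h - 1}

lemma mul_mem_T (g : H) : ∀ x ∈ Tspan H, of ℤ H g * x ∈ Tspan H := by
  intro x hx
  refine Submodule.span_induction ?_ ?_ ?_ ?_ hx
  · rintro y ⟨h, rfl⟩
    have e : of ℤ H g * (of ℤ H h - 1) = (of ℤ H (g * h) - 1) - (of ℤ H g - 1) := by
      rw [mul_sub, mul_one, ← map_mul]; abel
    rw [e]
    exact sub_mem (Submodule.subset_span ⟨_, rfl⟩) (Submodule.subset_span ⟨_, rfl⟩)
  · simp
  · intro a b _ _ ha hb; rw [mul_add]; exact add_mem ha hb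
  · intro n a _ ha; rw [mul_smul_comm]; exact Submodule.smul_mem _ _ ha

lemma aug_le_T : ∀ x ∈ augIdeal H, x ∈ Tspan H := by
  intro x hx
  refine Submodule.span_induction ?_ ?_ ?_ ?_ hx
  · exact fun y hy => Submodule.subset_span hy
  · simp
  · intro a b _ _ ha hb; exact add_mem ha hb
  · intro r y _ hy
    rw [smul_eq_mul]
    induction r using MonoidAlgebra.induction_linear with
    | zero => simp only [zero_mul]; exact zero_mem _
    | add f g hf hg => rw [add_mul]; exact add_mem hf hg
    | single g n =>
      rw [single_eq, smul_mul_assoc]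
      exact Submodule.smul_mem _ _ (mul_mem_T g _ hy)

lemma T_le_aug : Tspan H ≤ (augIdeal H).restrictScalars ℤ :=
  Submodule.span_le.2 fun _ hy => Ideal.subset_span hy

abbrev Qt (H : Type*) [Group H] :=
  ↥(augIdeal H) ⧸ Submodule.comap (augIdeal H).subtype (ideal2 H)

noncomputable def f0 (H : Type*) [Group H] :
    ↥(augIdeal H) →+ Additive (Abelianization ↥(Lsub H)) where
  toFun a := FF H a.1
  map_zero' := by simp
  map_add' a b := by simp

noncomputable def betaAdd (H : Type*) [Group H] :
    Qt H →+ Additive (Abelianization ↥(Lsub H)) :=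
  QuotientAddGroup.lift (Submodule.comap (augIdeal H).subtype (ideal2 H)).toAddSubgroup (f0 H)
    (fun a ha => FF_ideal2 a.1 ha)

lemma betaAdd_mk (a : ↥(augIdeal H)) :
    betaAdd H (Submodule.Quotient.mk a) = FF H a.1 := rfl

end Stmt7

namespace Stmt7

variable {H : Type*} [Group H]

noncomputable def actAut (H : Type*) [Group H] (h : H) : Qt H ≃+ Qt H where
  toFun q := of ℤ H h • q
  invFun q := of ℤ H h⁻¹ • q
  left_inv q := by
    show of ℤ H h⁻¹ • of ℤ H h • q = q
    rw [smul_smul, ← map_mul, inv_mul_cancel, map_one, one_smul]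
  right_inv q := by
    show of ℤ H h • of ℤ H h⁻¹ • q = q
    rw [smul_smul, ← map_mul, mul_inv_cancel, map_one, one_smul]
  map_add' p q := smul_add _ p q

noncomputable def phiQ (H : Type*) [Group H] : H →* MulAut (Multiplicative (Qt H)) where
  toFun h := AddEquiv.toMultiplicative (actAut H h)
  map_one' := by
    apply MulEquiv.ext
    intro q
    show Multiplicative.ofAdd (of ℤ H 1 • Multiplicative.toAdd q) = q
    rw [map_one, one_smul]
    rfl
  map_mul' g h := by
    apply MulEquiv.ext
    intro q
    show Multiplicative.ofAdd (of ℤ H (g * h) • Multiplicative.toAdd q) = _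
    rw [map_mul, mul_smul]
    rfl

lemma phiQ_apply (h : H) (q : Qt H) :
    phiQ H h (Multiplicative.ofAdd q) = Multiplicative.ofAdd (of ℤ H h • q) := rfl

noncomputable def ael (h : H) : ↥(augIdeal H) :=
  ⟨of ℤ H h - 1, Ideal.subset_span ⟨h, rfl⟩⟩

noncomputable def nQ (h : H) : Multiplicative (Qt H) :=
  Multiplicative.ofAdd (Submodule.Quotient.mk (ael h))

lemma ael_one : ael (1 : H) = (0 : ↥(augIdeal H)) := by
  apply Subtype.ext
  show of ℤ H 1 - 1 = 0
  rw [map_one, sub_self]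

lemma ael_mul (g h : H) : ael (g * h) = ael g + of ℤ H g • ael h := by
  apply Subtype.ext
  show of ℤ H (g * h) - 1 = (of ℤ H g - 1) + of ℤ H g * (of ℤ H h - 1)
  rw [map_mul]
  noncomm_ring

noncomputable def fpsi (H : Type*) [Group H] :
    H →* Multiplicative (Qt H) ⋊[phiQ H] H where
  toFun h := ⟨nQ h, h⟩
  map_one' := by
    refine SemidirectProduct.ext ?_ rfl
    show nQ (1 : H) = 1
    rw [nQ, ael_one]
    rfl
  map_mul' g h := by
    refine SemidirectProduct.ext ?_ rfl
    show nQ (g * h) = nQ g * phiQ H g (nQ h)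
    rw [nQ, nQ, nQ, phiQ_apply, ael_mul, Submodule.Quotient.mk_add, Submodule.Quotient.mk_smul]
    rfl

noncomputable def bigF (H : Type*) [Group H] :
    Monoid.Coprod H H →* Multiplicative (Qt H) ⋊[phiQ H] H :=
  Monoid.Coprod.lift SemidirectProduct.inr (fpsi H)

lemma sq_mem_ideal2 (h : H) : (of ℤ H h - 1) ^ 2 ∈ ideal2 H :=
  Ideal.subset_span ⟨h, 1, (mul_one _).symm⟩

lemma phi_nQ_self (h : H) : phiQ H h (nQ h) = nQ h := by
  rw [nQ, phiQ_apply, ← Submodule.Quotient.mk_smul]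
  congr 1
  rw [Submodule.Quotient.eq]
  show (of ℤ H h • ael h - ael h).1 ∈ ideal2 H
  have e : (of ℤ H h • ael h - ael h).1 = (of ℤ H h - 1) ^ 2 := by
    show of ℤ H h • (of ℤ H h - 1) - (of ℤ H h - 1) = _
    rw [smul_eq_mul]
    noncomm_ring
  rw [e]
  exact sq_mem_ideal2 h

lemma phi_inv_nQ (h : H) : phiQ H h⁻¹ (nQ h) = nQ h := by
  rw [nQ, phiQ_apply, ← Submodule.Quotient.mk_smul]
  congr 1
  rw [Submodule.Quotient.eq]
  show (of ℤ H h⁻¹ • ael h - ael h).1 ∈ ideal2 H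
  have e : (of ℤ H h⁻¹ • ael h - ael h).1 = -(of ℤ H h⁻¹ * (of ℤ H h - 1) ^ 2) := by
    show of ℤ H h⁻¹ • (of ℤ H h - 1) - (of ℤ H h - 1) = _
    rw [smul_eq_mul]
    have e1 : of ℤ H h⁻¹ * of ℤ H h = 1 := by rw [← map_mul, inv_mul_cancel, map_one]
    have e2 : of ℤ H h⁻¹ * (of ℤ H h - 1) ^ 2
        = of ℤ H h⁻¹ * (of ℤ H h * of ℤ H h) - 2 * of ℤ H h⁻¹ * of ℤ H h + of ℤ H h⁻¹ := by
      noncomm_ring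
    rw [e2, ← mul_assoc, e1, one_mul, mul_assoc, e1]
    noncomm_ring
    rw [e1]
    abel
  rw [e]
  exact neg_mem (Ideal.mul_mem_left _ _ (sq_mem_ideal2 h))

lemma bigF_rel : ∀ x ∈ chiRel H, x ∈ (bigF H).ker := by
  rintro x ⟨h, rfl⟩
  rw [MonoidHom.mem_ker, map_commutatorElement, commutatorElement_eq_one_iff_mul_comm]
  simp only [bigF]
  rw [Monoid.Coprod.lift_apply_inl, Monoid.Coprod.lift_apply_inr]
  refine SemidirectProduct.ext ?_ rfl
  show (1 : Multiplicative (Qt H)) * phiQ H h (nQ h) = nQ h * phiQ H h 1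
  rw [phi_nQ_self, map_one, one_mul, mul_one]

noncomputable def Phi (H : Type*) [Group H] :
    chi H →* Multiplicative (Qt H) ⋊[phiQ H] H :=
  QuotientGroup.lift _ (bigF H)
    (fun x hx => MonoidHom.mem_ker.1
      (Subgroup.normalClosure_le_normal (N := (bigF H).ker) bigF_rel hx))

lemma Phi_iota (h : H) : Phi H (chiIota H h) = SemidirectProduct.inr h := rfl

lemma Phi_psi (h : H) : Phi H (chiPsi H h) = ⟨nQ h, h⟩ := rfl

lemma Phi_lel (h : H) : Phi H (lel h) = ⟨nQ h, 1⟩ := by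
  rw [lel, map_mul, map_inv, Phi_iota, Phi_psi, ← map_inv, SemidirectProduct.mul_def]
  show SemidirectProduct.mk ((1 : Multiplicative (Qt H)) * phiQ H h⁻¹ (nQ h)) (h⁻¹ * h) = _
  rw [one_mul, inv_mul_cancel, phi_inv_nQ]

lemma right_eq_one : ∀ x ∈ Lsub H, (Phi H x).right = 1 := by
  have hle : Lsub H ≤ (SemidirectProduct.rightHom.comp (Phi H)).ker := by
    rw [Lsub]
    refine (Subgroup.closure_le _).2 ?_
    rintro y ⟨h, rfl⟩
    show SemidirectProduct.rightHom (Phi H ((chiIota H h)⁻¹ * chiPsi H h)) = 1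
    rw [show (chiIota H h)⁻¹ * chiPsi H h = lel h from rfl, Phi_lel]
    rfl
  intro x hx
  exact MonoidHom.mem_ker.1 (hle hx)

noncomputable def theta (H : Type*) [Group H] : ↥(Lsub H) →* Multiplicative (Qt H) where
  toFun x := (Phi H x.1).left
  map_one' := by
    show (Phi H ((1 : ↥(Lsub H)) : chi H)).left = 1
    rw [show ((1 : ↥(Lsub H)) : chi H) = 1 from rfl, map_one]
    rfl
  map_mul' x y := by
    show (Phi H ((x * y : ↥(Lsub H)) : chi H)).left = _
    rw [show ((x * y : ↥(Lsub H)) : chi H) = (x : chi H) * (y : chi H) from rfl, map_mul,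
      SemidirectProduct.mul_left, right_eq_one x.1 x.2, map_one, MulAut.one_apply]

noncomputable def alpha (H : Type*) [Group H] :
    Abelianization ↥(Lsub H) →* Multiplicative (Qt H) :=
  Abelianization.lift (theta H)

lemma alpha_of (h : H) (hm : lel h ∈ Lsub H) :
    alpha H (Abelianization.of ⟨lel h, hm⟩) = nQ h := by
  rw [alpha, Abelianization.lift_apply_of]
  show (Phi H (lel h)).left = nQ h
  rw [Phi_lel]

noncomputable def betaM (H : Type*) [Group H] :
    Multiplicative (Qt H) →* Abelianization ↥(Lsub H) :=
  AddMonoidHom.toMultiplicativeLeft (betaAdd H)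

lemma mm_one : mm (1 : H) = 0 := by
  rw [mm]
  have : (⟨lel (1 : H), lel_mem 1⟩ : ↥(Lsub H)) = 1 := Subtype.ext lel_one
  rw [this, map_one]
  rfl

lemma FF_one : FF H (1 : MonoidAlgebra ℤ H) = 0 := by
  rw [show (1 : MonoidAlgebra ℤ H) = of ℤ H 1 from (map_one _).symm, FF_of, mm_one]

lemma betaM_nQ (h : H) : betaM H (nQ h) = Abelianization.of ⟨lel h, lel_mem h⟩ := by
  show Additive.toMul (betaAdd H (Multiplicative.toAdd (nQ h))) = _
  rw [show Multiplicative.toAdd (nQ h) = Submodule.Quotient.mk (ael h) from rfl, betaAdd_mk]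
  show Additive.toMul (FF H (of ℤ H h - 1)) = _
  rw [map_sub, FF_of, FF_one, sub_zero]
  rfl

end Stmt7

namespace Stmt7

variable {H : Type*} [Group H]

lemma round1 (x : Abelianization ↥(Lsub H)) : betaM H (alpha H x) = x := by
  have hcomp : (betaM H).comp (alpha H) = MonoidHom.id _ := by
    apply Abelianization.hom_ext
    apply MonoidHom.ext
    rintro ⟨y, hy⟩
    show betaM H (alpha H (Abelianization.of ⟨y, hy⟩)) = Abelianization.of ⟨y, hy⟩
    refine Subgroup.closure_induction
      (p := fun z hz => betaM H (alpha H (Abelianization.of ⟨z, hz⟩)) = Abelianization.of ⟨z, hz⟩)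
      ?_ ?_ ?_ ?_ hy
    · rintro z ⟨h, rfl⟩
      have hz : lel h ∈ Lsub H := lel_mem h
      show betaM H (alpha H (Abelianization.of ⟨lel h, hz⟩)) = Abelianization.of ⟨lel h, hz⟩
      rw [alpha_of h hz, betaM_nQ]
    · show betaM H (alpha H (Abelianization.of 1)) = Abelianization.of 1
      simp [map_one]
    · intro z w hz hw ihz ihw
      have e : (⟨z * w, mul_mem hz hw⟩ : ↥(Lsub H)) = ⟨z, hz⟩ * ⟨w, hw⟩ := rfl
      rw [e, map_mul, map_mul, map_mul, ihz, ihw]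
    · intro z hz ihz
      have e : (⟨z⁻¹, inv_mem hz⟩ : ↥(Lsub H)) = (⟨z, hz⟩ : ↥(Lsub H))⁻¹ := rfl
      rw [e, map_inv, map_inv, map_inv, ihz]
  exact DFunLike.congr_fun hcomp x

lemma round2 (y : Multiplicative (Qt H)) : alpha H (betaM H y) = y := by
  obtain ⟨q, rfl⟩ : ∃ q : Qt H, Multiplicative.ofAdd q = y := ⟨Multiplicative.toAdd y, rfl⟩
  obtain ⟨a, rfl⟩ := Submodule.Quotient.mk_surjective _ q
  obtain ⟨x, hxA⟩ := a
  have hxT : x ∈ Tspan H := aug_le_T x hxA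
  revert hxA
  refine Submodule.span_induction
    (p := fun z _ => ∀ hmem : z ∈ augIdeal H,
      alpha H (betaM H (Multiplicative.ofAdd (Submodule.Quotient.mk ⟨z, hmem⟩))) =
        Multiplicative.ofAdd (Submodule.Quotient.mk ⟨z, hmem⟩)) ?_ ?_ ?_ ?_ hxT
  · rintro z ⟨h, rfl⟩ hmem
    show alpha H (betaM H (nQ h)) = nQ h
    rw [betaM_nQ, alpha_of]
  · intro hmem
    have e : (⟨(0 : MonoidAlgebra ℤ H), hmem⟩ : ↥(augIdeal H)) = 0 := rfl
    rw [e, Submodule.Quotient.mk_zero]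
    show alpha H (betaM H 1) = 1
    rw [map_one, map_one]
  · intro u v huT hvT ihu ihv hmem
    have huA : u ∈ augIdeal H := T_le_aug huT
    have hvA : v ∈ augIdeal H := T_le_aug hvT
    have e : (⟨u + v, hmem⟩ : ↥(augIdeal H)) = ⟨u, huA⟩ + ⟨v, hvA⟩ := rfl
    rw [e, Submodule.Quotient.mk_add]
    have e2 : (Multiplicative.ofAdd ((Submodule.Quotient.mk ⟨u, huA⟩ : Qt H) +
        (Submodule.Quotient.mk ⟨v, hvA⟩ : Qt H))) =
        Multiplicative.ofAdd (Submodule.Quotient.mk ⟨u, huA⟩ : Qt H) *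
        Multiplicative.ofAdd (Submodule.Quotient.mk ⟨v, hvA⟩ : Qt H) :=
      ofAdd_add _ _
    rw [e2, map_mul, map_mul, ihu huA, ihv hvA]
  · intro n z hzT ihz hmem
    have hzA : z ∈ augIdeal H := T_le_aug hzT
    have e0 : n • z = n • z := rfl
    have e : (⟨n • z, hmem⟩ : ↥(augIdeal H)) = n • (⟨z, hzA⟩ : ↥(augIdeal H)) := by
      apply Subtype.ext
      show n • z = (n • (⟨z, hzA⟩ : ↥(augIdeal H)) : ↥(augIdeal H)).1
      rw [Submodule.coe_smul_of_tower]
    rw [e, Submodule.Quotient.mk_smul]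
    have e2 : (n • Submodule.Quotient.mk (⟨z, hzA⟩ : ↥(augIdeal H)) : Qt H)
        = n • (Submodule.Quotient.mk (⟨z, hzA⟩ : ↥(augIdeal H)) : Qt H) := by
      exact int_smul_eq_zsmul _ n _
    rw [e2, ofAdd_zsmul, map_zpow, map_zpow, ihz hzA]

noncomputable def finalIso (H : Type*) [Group H] :
    Abelianization ↥(Lsub H) ≃* Multiplicative (Qt H) where
  toFun := alpha H
  invFun := betaM H
  left_inv := round1
  right_inv := round2
  map_mul' := map_mul _

end Stmt7

/-- For any group H, the abelianization L(H)/L(H)′ is isomorphic to the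
additive quotient group A_ℤ(H)/I₂(H). -/
theorem stmt_7 (H : Type*) [Group H] :
    Nonempty
      (Abelianization ↥(Lsub H) ≃*
        Multiplicative
          (↥(augIdeal H) ⧸ Submodule.comap (augIdeal H).subtype (ideal2 H))) := by
  exact ⟨Stmt7.finalIso H⟩
end

section
/- Let H be a group generated by a finite set S = {a₁, …, aₙ}. Then the quotient abelian group ℤ(H)/I₂(H) is generated by the images of the elements a_{i₁}a_{i₂}⋯a_{i_s} with 1 ≤ i₁ < i₂ < … < i_s ≤ n (including the empty product 1); in particular, A_ℤ(H)/I₂(H) is a finitely generated abelian group. -/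
open MonoidAlgebra

namespace Stmt9Aux

variable {H : Type*} [Group H]

noncomputable def u (h : H) : MonoidAlgebra ℤ H := MonoidAlgebra.of ℤ H h - 1

theorem sq_mul_mem (h : H) (b : MonoidAlgebra ℤ H) : u h ^ 2 * b ∈ ideal2 H :=
  Ideal.subset_span ⟨h, b, rfl⟩

theorem mul_right_mem {x : MonoidAlgebra ℤ H} (hx : x ∈ ideal2 H)
    (c : MonoidAlgebra ℤ H) : x * c ∈ ideal2 H := by
  induction hx using Submodule.span_induction with
  | mem y hy =>
      obtain ⟨h, b, rfl⟩ := hy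
      rw [mul_assoc]
      exact Ideal.subset_span ⟨h, b * c, rfl⟩
  | zero => simp
  | add y z _ _ hy hz => rw [add_mul]; exact add_mem hy hz
  | smul r y _ hy => rw [smul_mul_assoc]; exact Submodule.smul_mem _ _ hy

theorem u_mul (h k : H) : u (h * k) = u h + u k + u h * u k := by
  simp only [u, map_mul]; noncomm_ring

theorem inv_add_mem (h : H) : u h⁻¹ + u h ∈ ideal2 H := by
  have e2 : (MonoidAlgebra.of ℤ H h) * (MonoidAlgebra.of ℤ H h⁻¹) = 1 := by
    rw [← map_mul]; simp [MonoidAlgebra.one_def]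
  have key : u h ^ 2 * (MonoidAlgebra.of ℤ H h⁻¹) = u h⁻¹ + u h := by
    have : u h ^ 2 * (MonoidAlgebra.of ℤ H h⁻¹)
        = MonoidAlgebra.of ℤ H h * (MonoidAlgebra.of ℤ H h * MonoidAlgebra.of ℤ H h⁻¹)
          - (MonoidAlgebra.of ℤ H h * MonoidAlgebra.of ℤ H h⁻¹)
          - (MonoidAlgebra.of ℤ H h * MonoidAlgebra.of ℤ H h⁻¹)
          + MonoidAlgebra.of ℤ H h⁻¹ := by
      simp only [u]; noncomm_ring
    rw [this, e2]
    simp only [u]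
    noncomm_ring
  rw [← key]
  exact sq_mul_mem h _

theorem anticomm (h k : H) : u h * u k + u k * u h ∈ ideal2 H := by
  have hA : u (k⁻¹ * h⁻¹) + u (h * k) ∈ ideal2 H := by
    simpa [mul_inv_rev] using inv_add_mem (h * k)
  have t1 := inv_add_mem k
  have t2 := inv_add_mem h
  have t3 : (u k⁻¹ + u k) * u h⁻¹ ∈ ideal2 H := mul_right_mem t1 _
  have t4 : u k * (u h⁻¹ + u h) ∈ ideal2 H := Ideal.mul_mem_left _ _ t2
  have key : u h * u k + u k * u h
      = (u (k⁻¹ * h⁻¹) + u (h * k)) - (u k⁻¹ + u k) - (u h⁻¹ + u h)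
        - ((u k⁻¹ + u k) * u h⁻¹ - u k * (u h⁻¹ + u h)) := by
    rw [u_mul, u_mul]; noncomm_ring
  rw [key]
  exact sub_mem (sub_mem (sub_mem hA t1) t2) (sub_mem t3 t4)


section Gens

variable {n : ℕ} (a : Fin n → H)

noncomputable def prodU (l : List (Fin n)) : MonoidAlgebra ℤ H :=
  (l.map fun i => u (a i)).prod

noncomputable def prodO (l : List (Fin n)) : MonoidAlgebra ℤ H :=
  (l.map fun i => MonoidAlgebra.of ℤ H (a i)).prod

@[simp] theorem prodU_nil : prodU a ([] : List (Fin n)) = 1 := rfl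

@[simp] theorem prodU_cons (t : Fin n) (l : List (Fin n)) :
    prodU a (t :: l) = u (a t) * prodU a l := by simp [prodU]

@[simp] theorem prodO_nil : prodO a ([] : List (Fin n)) = 1 := rfl

@[simp] theorem prodO_cons (t : Fin n) (l : List (Fin n)) :
    prodO a (t :: l) = MonoidAlgebra.of ℤ H (a t) * prodO a l := by simp [prodO]

/-- span of sorted `u`-products with all indices `≥ c`, together with the ideal. -/
noncomputable def sp (c : Fin n) : Submodule ℤ (MonoidAlgebra ℤ H) :=
  Submodule.span ℤ
    ({x | ∃ m : List (Fin n), m.Pairwise (· < ·) ∧ (∀ y ∈ m, c ≤ y) ∧ x = prodU a m}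
      ∪ (ideal2 H : Set (MonoidAlgebra ℤ H)))

/-- span of all sorted `u`-products together with the ideal. -/
noncomputable def NN : Submodule ℤ (MonoidAlgebra ℤ H) :=
  Submodule.span ℤ
    ({x | ∃ m : List (Fin n), m.Pairwise (· < ·) ∧ x = prodU a m}
      ∪ (ideal2 H : Set (MonoidAlgebra ℤ H)))

theorem ideal2_le_sp (c : Fin n) {x : MonoidAlgebra ℤ H} (hx : x ∈ ideal2 H) :
    x ∈ sp a c := Submodule.subset_span (Or.inr hx)

theorem ideal2_le_NN {x : MonoidAlgebra ℤ H} (hx : x ∈ ideal2 H) :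
    x ∈ NN a := Submodule.subset_span (Or.inr hx)

theorem sp_le_NN (c : Fin n) : sp a c ≤ NN a := by
  apply Submodule.span_mono
  rintro x (⟨m, hm, _, rfl⟩ | hx)
  · exact Or.inl ⟨m, hm, rfl⟩
  · exact Or.inr hx

/-- Lemma D: multiplying a `sp j` element by `u (a j)` lands in `sp b` for `b ≤ j`. -/
theorem mul_u_sp {j b : Fin n} (hbj : b ≤ j) {x : MonoidAlgebra ℤ H}
    (hx : x ∈ sp a j) : u (a j) * x ∈ sp a b := by
  induction hx using Submodule.span_induction with
  | mem y hy =>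
      rcases hy with ⟨m, hm, hbd, rfl⟩ | hy
      · cases m with
        | nil =>
            apply Submodule.subset_span
            refine Or.inl ⟨[j], List.pairwise_singleton _ _, ?_, by simp⟩
            intro y hy; simp at hy; subst hy; exact hbj
        | cons y m' =>
            have hjy : j ≤ y := hbd y (List.mem_cons_self)
            rcases eq_or_lt_of_le hjy with h | h
            · subst h
              rw [prodU_cons, ← mul_assoc, ← sq]
              exact ideal2_le_sp a b (sq_mul_mem _ _)
            · apply Submodule.subset_span
              refine Or.inl ⟨j :: y :: m', ?_, ?_, by simp⟩
              · rw [List.pairwise_cons]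
                refine ⟨?_, hm⟩
                intro z hz
                rcases List.mem_cons.mp hz with rfl | hz
                · exact h
                · exact lt_trans h ((List.pairwise_cons.mp hm).1 z hz)
              · intro z hz
                rcases List.mem_cons.mp hz with rfl | hz
                · exact hbj
                · exact le_trans hbj (hbd z hz)
      · exact ideal2_le_sp a b (Ideal.mul_mem_left _ _ hy)
  | zero => rw [mul_zero]; exact zero_mem _
  | add y z _ _ hy hz => rw [mul_add]; exact add_mem hy hz
  | smul r y _ hy => rw [mul_smul_comm]; exact Submodule.smul_mem _ _ hy

/-- Lemma C': multiplying a bounded sorted product by any `u (a t)` with `b ≤ t`. -/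
theorem mul_u_sorted {l : List (Fin n)} (hl : l.Pairwise (· < ·)) :
    ∀ t b : Fin n, b ≤ t → (∀ x ∈ l, b ≤ x) → u (a t) * prodU a l ∈ sp a b := by
  induction l with
  | nil =>
      intro t b hbt _
      apply Submodule.subset_span
      refine Or.inl ⟨[t], List.pairwise_singleton _ _, ?_, by simp⟩
      intro y hy; simp at hy; subst hy; exact hbt
  | cons j l' ih =>
      intro t b hbt hbl
      have hl' : l'.Pairwise (· < ·) := (List.pairwise_cons.mp hl).2
      have hjl' : ∀ x ∈ l', j < x := (List.pairwise_cons.mp hl).1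
      have hbj : b ≤ j := hbl j (List.mem_cons_self)
      rcases lt_trichotomy t j with h | h | h
      · apply Submodule.subset_span
        refine Or.inl ⟨t :: j :: l', ?_, ?_, by simp⟩
        · rw [List.pairwise_cons]
          refine ⟨?_, hl⟩
          intro z hz
          rcases List.mem_cons.mp hz with rfl | hz
          · exact h
          · exact lt_trans h (hjl' z hz)
        · intro z hz
          rcases List.mem_cons.mp hz with rfl | hz
          · exact hbt
          · exact hbl z hz
      · subst h
        rw [prodU_cons, ← mul_assoc, ← sq]
        exact ideal2_le_sp a b (sq_mul_mem _ _)
      · have h1 : u (a t) * prodU a l' ∈ sp a j :=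
          ih hl' t j (le_of_lt h) fun x hx => le_of_lt (hjl' x hx)
        have h2 : u (a j) * (u (a t) * prodU a l') ∈ sp a b := mul_u_sp a hbj h1
        have h3 : (u (a t) * u (a j) + u (a j) * u (a t)) * prodU a l' ∈ ideal2 H :=
          mul_right_mem (anticomm _ _) _
        have key : u (a t) * prodU a (j :: l')
            = (u (a t) * u (a j) + u (a j) * u (a t)) * prodU a l'
              - u (a j) * (u (a t) * prodU a l') := by
          rw [prodU_cons]; noncomm_ring
        rw [key]
        exact sub_mem (ideal2_le_sp a b h3) h2

theorem foldr_min_le (t : Fin n) (l : List (Fin n)) :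
    l.foldr min t ≤ t ∧ ∀ x ∈ l, l.foldr min t ≤ x := by
  induction l with
  | nil => simp
  | cons j l' ih =>
      refine ⟨le_trans (min_le_right _ _) ih.1, ?_⟩
      intro x hx
      rcases List.mem_cons.mp hx with rfl | hx
      · exact min_le_left _ _
      · exact le_trans (min_le_right _ _) (ih.2 x hx)

/-- Lemma E: `NN` is stable under left multiplication by `u (a t)`. -/
theorem mul_u_NN (t : Fin n) {x : MonoidAlgebra ℤ H} (hx : x ∈ NN a) :
    u (a t) * x ∈ NN a := by
  induction hx using Submodule.span_induction with
  | mem y hy =>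
      rcases hy with ⟨m, hm, rfl⟩ | hy
      · exact sp_le_NN a (m.foldr min t)
          (mul_u_sorted a hm t _ (foldr_min_le t m).1 (foldr_min_le t m).2)
      · exact ideal2_le_NN a (Ideal.mul_mem_left _ _ hy)
  | zero => rw [mul_zero]; exact zero_mem _
  | add y z _ _ hy hz => rw [mul_add]; exact add_mem hy hz
  | smul r y _ hy => rw [mul_smul_comm]; exact Submodule.smul_mem _ _ hy

theorem prodU_mul_NN (l : List (Fin n)) {y : MonoidAlgebra ℤ H} (hy : y ∈ NN a) :
    prodU a l * y ∈ NN a := by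
  induction l with
  | nil => simpa using hy
  | cons t l' ih => rw [prodU_cons, mul_assoc]; exact mul_u_NN a t ih

theorem mul_NN {x y : MonoidAlgebra ℤ H} (hx : x ∈ NN a) (hy : y ∈ NN a) :
    x * y ∈ NN a := by
  induction hx using Submodule.span_induction with
  | mem z hz =>
      rcases hz with ⟨m, _, rfl⟩ | hz
      · exact prodU_mul_NN a m hy
      · exact ideal2_le_NN a (mul_right_mem hz y)
  | zero => rw [zero_mul]; exact zero_mem _
  | add z w _ _ hz hw => rw [add_mul]; exact add_mem hz hw
  | smul r z _ hz => rw [smul_mul_assoc]; exact Submodule.smul_mem _ _ hz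


theorem one_mem_NN : (1 : MonoidAlgebra ℤ H) ∈ NN a :=
  Submodule.subset_span (Or.inl ⟨[], List.Pairwise.nil, by simp⟩)

theorem of_mem_NN (hgen : Subgroup.closure (Set.range a) = ⊤) (h : H) :
    MonoidAlgebra.of ℤ H h ∈ NN a := by
  have hh : h ∈ Subgroup.closure (Set.range a) := hgen ▸ Subgroup.mem_top h
  induction hh using Subgroup.closure_induction with
  | mem x hx =>
      obtain ⟨t, rfl⟩ := hx
      have : MonoidAlgebra.of ℤ H (a t) = prodU a [t] + prodU a [] := by
        simp [u]
      rw [this]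
      exact add_mem (Submodule.subset_span (Or.inl ⟨[t], List.pairwise_singleton _ _, rfl⟩))
        (one_mem_NN a)
  | one => rw [map_one]; exact one_mem_NN a
  | mul x y _ _ hx hy => rw [map_mul]; exact mul_NN a hx hy
  | inv x _ hx =>
      have key : MonoidAlgebra.of ℤ H x⁻¹
          = (u x⁻¹ + u x) - MonoidAlgebra.of ℤ H x + (2 : ℤ) • (1 : MonoidAlgebra ℤ H) := by
        simp only [u]; abel
      rw [key]
      exact add_mem (sub_mem (ideal2_le_NN a (inv_add_mem x)) hx)
        (Submodule.smul_mem _ _ (one_mem_NN a))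

theorem all_mem_NN (hgen : Subgroup.closure (Set.range a) = ⊤) (x : MonoidAlgebra ℤ H) :
    x ∈ NN a := by
  induction x using MonoidAlgebra.induction_on with
  | of h => exact of_mem_NN a hgen h
  | add f g hf hg => exact add_mem hf hg
  | smul r f hf => exact Submodule.smul_mem _ _ hf

/-- expansion of `prodU` in terms of `prodO` over sublists. -/
theorem prodU_mem_span_prodO (l : List (Fin n)) :
    prodU a l ∈ Submodule.span ℤ {x | ∃ m : List (Fin n), m.Sublist l ∧ x = prodO a m} := by
  induction l with
  | nil =>
      exact Submodule.subset_span ⟨[], List.nil_sublist _, rfl⟩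
  | cons t l' ih =>
      have key : prodU a (t :: l')
          = MonoidAlgebra.of ℤ H (a t) * prodU a l' - prodU a l' := by
        rw [prodU_cons]; simp only [u]; noncomm_ring
      rw [key]
      have hmul : ∀ y ∈ Submodule.span ℤ {x | ∃ m : List (Fin n), m.Sublist l' ∧ x = prodO a m},
          MonoidAlgebra.of ℤ H (a t) * y
            ∈ Submodule.span ℤ {x | ∃ m : List (Fin n), m.Sublist (t :: l') ∧ x = prodO a m} := by
        intro y hy
        induction hy using Submodule.span_induction with
        | mem y hy =>
            obtain ⟨m, hm, rfl⟩ := hy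
            exact Submodule.subset_span ⟨t :: m, List.Sublist.cons₂ t hm, by simp⟩
        | zero => rw [mul_zero]; exact zero_mem _
        | add y z _ _ hy hz => rw [mul_add]; exact add_mem hy hz
        | smul r y _ hy => rw [mul_smul_comm]; exact Submodule.smul_mem _ _ hy
      refine sub_mem (hmul _ ih) (Submodule.span_mono ?_ ih)
      · rintro x ⟨m, hm, rfl⟩
        exact ⟨m, hm.cons t, rfl⟩


/-- generators of the quotient: ordered products of group elements indexed by finsets. -/
def Ogen : Set (MonoidAlgebra ℤ H) :=
  {x | ∃ s : Finset (Fin n), x = prodO a (s.sort (· ≤ ·))}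

theorem prodO_sorted_mem_Ogen {m : List (Fin n)} (hm : m.Pairwise (· < ·)) :
    prodO a m ∈ Ogen a := by
  refine ⟨m.toFinset, ?_⟩
  rw [(List.toFinset_sort (· ≤ ·) hm.nodup).mpr (hm.imp le_of_lt)]

theorem master (hgen : Subgroup.closure (Set.range a) = ⊤) (x : MonoidAlgebra ℤ H) :
    x ∈ Submodule.span ℤ (Ogen a) ⊔ (ideal2 H).restrictScalars ℤ := by
  have hx := all_mem_NN a hgen x
  refine Submodule.span_le.mpr ?_ hx
  rintro y (⟨m, hm, rfl⟩ | hy)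
  · refine Submodule.mem_sup_left ?_
    refine Submodule.span_le.mpr ?_ (prodU_mem_span_prodO a m)
    rintro z ⟨m', hm', rfl⟩
    exact Submodule.subset_span (prodO_sorted_mem_Ogen a (hm.sublist hm'))
  · exact Submodule.mem_sup_right hy

end Gens

end Stmt9Aux

theorem stmt_9' (H : Type*) [Group H] (n : ℕ) (a : Fin n → H)
    (hgen : Subgroup.closure (Set.range a) = ⊤) :
    AddSubgroup.closure
      {x : MonoidAlgebra ℤ H ⧸ ideal2 H |
        ∃ s : Finset (Fin n),
          x = Submodule.Quotient.mk
            (((s.sort (· ≤ ·)).map fun i => MonoidAlgebra.of ℤ H (a i)).prod)} = ⊤ := by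
  set G : Set (MonoidAlgebra ℤ H ⧸ ideal2 H) :=
    {x | ∃ s : Finset (Fin n),
      x = Submodule.Quotient.mk
        (((s.sort (· ≤ ·)).map fun i => MonoidAlgebra.of ℤ H (a i)).prod)} with hGdef
  rw [eq_top_iff]
  rintro x -
  obtain ⟨r, rfl⟩ := Submodule.Quotient.mk_surjective (ideal2 H) x
  obtain ⟨p, hp, i, hi, rfl⟩ := Submodule.mem_sup.mp (Stmt9Aux.master a hgen r)
  have hzero : (Submodule.Quotient.mk i : MonoidAlgebra ℤ H ⧸ ideal2 H) = 0 :=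
    (Submodule.Quotient.mk_eq_zero _).mpr hi
  rw [Submodule.Quotient.mk_add, hzero, add_zero]
  -- now push `p` through the quotient map as an ℤ-linear map
  set f : MonoidAlgebra ℤ H →ₗ[ℤ] MonoidAlgebra ℤ H ⧸ ideal2 H :=
    ((ideal2 H).mkQ.toAddMonoidHom).toIntLinearMap with hf
  have himg : f p ∈ Submodule.span ℤ (f '' Stmt9Aux.Ogen a) := by
    rw [← Submodule.map_span]
    exact Submodule.mem_map_of_mem hp
  have hsub : f '' Stmt9Aux.Ogen a ⊆ G := by
    rintro y ⟨z, ⟨s, rfl⟩, rfl⟩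
    exact ⟨s, rfl⟩
  have h1 : f p ∈ AddSubgroup.closure (f '' Stmt9Aux.Ogen a) := by
    rw [← Submodule.span_int_eq_addSubgroupClosure]
    exact himg
  exact AddSubgroup.closure_mono hsub h1

theorem stmt_9'' (H : Type*) [Group H] (n : ℕ) (a : Fin n → H)
    (hgen : Subgroup.closure (Set.range a) = ⊤) :
    AddGroup.FG
      (↥(augIdeal H) ⧸ Submodule.comap (augIdeal H).subtype (ideal2 H)) := by
  -- the full quotient is a finitely generated abelian group
  have hfgQ : AddGroup.FG (MonoidAlgebra ℤ H ⧸ ideal2 H) := by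
    rw [AddGroup.fg_iff]
    refine ⟨_, stmt_9' H n a hgen, ?_⟩
    apply Set.Finite.subset (Set.finite_range
      (fun s : Finset (Fin n) => (Submodule.Quotient.mk
        (((s.sort (· ≤ ·)).map fun i => MonoidAlgebra.of ℤ H (a i)).prod) :
          MonoidAlgebra ℤ H ⧸ ideal2 H)))
    rintro x ⟨s, rfl⟩
    exact ⟨s, rfl⟩
  haveI : Module.Finite ℤ (MonoidAlgebra ℤ H ⧸ ideal2 H) :=
    Module.Finite.iff_addGroup_fg.mpr hfgQ
  haveI : IsNoetherian ℤ (MonoidAlgebra ℤ H ⧸ ideal2 H) :=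
    isNoetherian_of_isNoetherianRing_of_finite ℤ _
  set φ : ↥(augIdeal H) →ₗ[MonoidAlgebra ℤ H] MonoidAlgebra ℤ H ⧸ ideal2 H :=
    (ideal2 H).mkQ.comp (augIdeal H).subtype with hφ
  have hker : LinearMap.ker φ = Submodule.comap (augIdeal H).subtype (ideal2 H) := by
    rw [hφ, LinearMap.ker_comp, Submodule.ker_mkQ]
  let e1 : (↥(augIdeal H) ⧸ Submodule.comap (augIdeal H).subtype (ideal2 H)) ≃ₗ[MonoidAlgebra ℤ H]
      (↥(augIdeal H) ⧸ LinearMap.ker φ) :=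
    Submodule.quotEquivOfEq _ _ hker.symm
  let e2 := φ.quotKerEquivRange
  have hrfg : (Submodule.restrictScalars ℤ (LinearMap.range φ)).FG :=
    IsNoetherian.noetherian _
  have h3 : AddSubgroup.FG
      (Submodule.restrictScalars ℤ (LinearMap.range φ)).toAddSubgroup :=
    (Submodule.fg_iff_addSubgroup_fg _).mp hrfg
  have h4 : AddGroup.FG ↥(LinearMap.range φ) :=
    (AddGroup.fg_iff_addSubgroup_fg _).mpr h3
  exact AddGroup.fg_of_surjective (f := ((e1.trans e2).symm.toAddEquiv.toAddMonoidHom))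
    (e1.trans e2).symm.toAddEquiv.surjective

/-- If H is generated by a₁, …, aₙ, then the quotient abelian group
ℤ(H)/I₂(H) is generated by the images of the products a_{i₁}⋯a_{i_s} with
strictly increasing indices (including the empty product 1); in particular,
A_ℤ(H)/I₂(H) is a finitely generated abelian group. -/
theorem stmt_9 (H : Type*) [Group H] (n : ℕ) (a : Fin n → H)
    (hgen : Subgroup.closure (Set.range a) = ⊤) :
    AddSubgroup.closure
      {x : MonoidAlgebra ℤ H ⧸ ideal2 H |
        ∃ s : Finset (Fin n),
          x = Submodule.Quotient.mk
            (((s.sort (· ≤ ·)).map fun i => MonoidAlgebra.of ℤ H (a i)).prod)} = ⊤ ∧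
    AddGroup.FG
      (↥(augIdeal H) ⧸ Submodule.comap (augIdeal H).subtype (ideal2 H)) :=
  ⟨stmt_9' H n a hgen, stmt_9'' H n a hgen⟩
end
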